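/- arXiv:1503.02411 — 5 statements merged into one kernel-verified Lean document; each statement's English description precedes it below -/
import Mathlib

section
/- Let s_c ∈ ℝ and let K : ℝ → ℝ be continuously differentiable with K(s) ≥ 0 and K'(s) ≥ 0 for all s, such that s ↦ √(K(s)) is integrable on (−∞, s_c] and s ↦ ∫_{−∞}^{s} √(K(u)) du is integrable on (−∞, s_c]. Let β : ℝ → ℝ be twice differentiable with β''(s) + K(s) β(s) = 0 for all s ∈ ℝ. Then there exist constants c₁, c₂ ∈ ℝ such that β'(s) → c₁ and β(s) − c₁ s → c₂ as s → −∞. -/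
open MeasureTheory Filter Set Topology

lemma tendsto_integral_Iic_atBot {f : ℝ → ℝ} {a : ℝ} (hf : IntegrableOn f (Set.Iic a)) :
    Tendsto (fun s => ∫ u in Set.Iic s, f u) atBot (𝓝 0) := by
  have h := MeasureTheory.tendsto_setIntegral_of_antitone (ι := ℝᵒᵈ)
    (s := fun i => Set.Iic (OrderDual.ofDual i)) (f := f) (μ := volume)
    (fun i => measurableSet_Iic)
    (fun i j hij => Set.Iic_subset_Iic.2 hij)
    ⟨OrderDual.toDual a, hf⟩
  have hempty : (⋂ i : ℝᵒᵈ, Set.Iic (OrderDual.ofDual i)) = ∅ := by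
    ext x
    simp only [Set.mem_iInter, Set.mem_Iic, Set.mem_empty_iff_false, iff_false, not_forall]
    exact ⟨OrderDual.toDual (x - 1), by simp⟩
  rw [hempty] at h
  simp only [Measure.restrict_empty, integral_zero_measure] at h
  exact h

theorem small_time_asymptotics_lemma (s_c : ℝ) (K : ℝ → ℝ)
    (hK : ContDiff ℝ 1 K)
    (hKpos : ∀ s : ℝ, 0 ≤ K s)
    (hK' : ∀ s : ℝ, 0 ≤ deriv K s)
    (hint₁ : IntegrableOn (fun s : ℝ => Real.sqrt (K s)) (Set.Iic s_c))
    (hint₂ : IntegrableOn (fun s : ℝ => ∫ u in Set.Iic s, Real.sqrt (K u)) (Set.Iic s_c))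
    (β : ℝ → ℝ)
    (hβ : Differentiable ℝ β) (hβ' : Differentiable ℝ (deriv β))
    (hode : ∀ s : ℝ, deriv (deriv β) s + K s * β s = 0) :
    ∃ c₁ c₂ : ℝ,
      Tendsto (deriv β) atBot (nhds c₁) ∧
      Tendsto (fun s : ℝ => β s - c₁ * s) atBot (nhds c₂) := by
  have hKdiff : Differentiable ℝ K := hK.differentiable one_ne_zero
  have hode' : deriv (deriv β) = fun t => -(K t * β t) := funext fun t => by linarith [hode t]
  -- energy function
  set E : ℝ → ℝ := fun s => (deriv β s) ^ 2 + K s * (β s) ^ 2 with hEdef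
  have hE : ∀ s, HasDerivAt E (deriv K s * (β s) ^ 2) s := by
    intro s
    have h1 : HasDerivAt (fun t => (deriv β t) ^ 2)
        (2 * deriv β s * deriv (deriv β) s) s := by
      simpa [mul_comm, mul_assoc, mul_left_comm] using ((hβ' s).hasDerivAt.fun_pow 2)
    have h2 : HasDerivAt (fun t => K t * (β t) ^ 2)
        (deriv K s * (β s) ^ 2 + K s * (2 * β s * deriv β s)) s := by
      have hb2 : HasDerivAt (fun t => (β t) ^ 2) (2 * β s * deriv β s) s := by
        simpa [mul_comm, mul_assoc, mul_left_comm] using ((hβ s).hasDerivAt.fun_pow 2)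
      exact (hKdiff s).hasDerivAt.mul hb2
    have h := h1.add h2
    have hh : deriv (deriv β) s = -(K s * β s) := by linarith [hode s]
    refine h.congr_deriv ?_
    rw [hh]; ring
  have hmono : Monotone E := by
    have hdiff : Differentiable ℝ E := fun s => (hE s).differentiableAt
    refine monotone_of_deriv_nonneg hdiff fun s => ?_
    rw [(hE s).deriv]
    exact mul_nonneg (hK' s) (sq_nonneg _)
  set B : ℝ := E s_c with hBdef
  have hB0 : 0 ≤ B := add_nonneg (sq_nonneg _) (mul_nonneg (hKpos _) (sq_nonneg _))
  -- pointwise bound on K * β below s_c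
  have hbound : ∀ s ≤ s_c, |K s * β s| ≤ Real.sqrt B * Real.sqrt (K s) := by
    intro s hs
    have hEle : K s * (β s) ^ 2 ≤ B :=
      le_trans (le_add_of_nonneg_left (sq_nonneg _)) (hmono hs)
    have h1 : Real.sqrt (K s) * |β s| ≤ Real.sqrt B := by
      have := Real.sqrt_le_sqrt hEle
      rwa [Real.sqrt_mul (hKpos s), Real.sqrt_sq_eq_abs] at this
    calc |K s * β s| = Real.sqrt (K s) * (Real.sqrt (K s) * |β s|) := by
          rw [abs_mul, abs_of_nonneg (hKpos s), ← mul_assoc,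
            Real.mul_self_sqrt (hKpos s)]
      _ ≤ Real.sqrt (K s) * Real.sqrt B :=
          mul_le_mul_of_nonneg_left h1 (Real.sqrt_nonneg _)
      _ = Real.sqrt B * Real.sqrt (K s) := mul_comm _ _
  -- integrability of f = K * β on Iic s_c
  set f : ℝ → ℝ := fun u => K u * β u with hfdef
  have hfcont : Continuous f := hK.continuous.mul hβ.continuous
  have hf : IntegrableOn f (Set.Iic s_c) := by
    refine Integrable.mono' (hint₁.const_mul (Real.sqrt B))
      (hfcont.aestronglyMeasurable.restrict) ?_
    refine (ae_restrict_iff' measurableSet_Iic).2 (ae_of_all _ fun s hs => ?_)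
    simpa [Real.norm_eq_abs, hfdef] using hbound s hs
  -- FTC for deriv β
  have hβ''cont : Continuous (deriv (deriv β)) := by
    rw [hode']; exact (hK.continuous.mul hβ.continuous).neg
  have key : ∀ s ≤ s_c, deriv β s =
      (deriv β s_c + ∫ u in Set.Iic s_c, f u) - ∫ u in Set.Iic s, f u := by
    intro s hs
    have hft : ∫ t in s..s_c, deriv (deriv β) t = deriv β s_c - deriv β s := by
      refine intervalIntegral.integral_deriv_eq_sub (fun x _ => hβ' x) ?_
      exact hβ''cont.intervalIntegrable _ _
    have hIic : (∫ t in s..s_c, f t) =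
        (∫ u in Set.Iic s_c, f u) - ∫ u in Set.Iic s, f u :=
      (intervalIntegral.integral_Iic_sub_Iic (hf.mono_set (Set.Iic_subset_Iic.2 hs)) hf).symm
    have : ∫ t in s..s_c, deriv (deriv β) t = -(∫ t in s..s_c, f t) := by
      rw [hode', intervalIntegral.integral_neg]
    rw [this, hIic] at hft
    linarith
  set c₁ : ℝ := deriv β s_c + ∫ u in Set.Iic s_c, f u with hc₁
  have htend₁ : Tendsto (deriv β) atBot (𝓝 c₁) := by
    have h0 : Tendsto (fun s => c₁ - ∫ u in Set.Iic s, f u) atBot (𝓝 (c₁ - 0)) :=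
      tendsto_const_nhds.sub (tendsto_integral_Iic_atBot hf)
    rw [sub_zero] at h0
    refine h0.congr' ?_
    filter_upwards [eventually_le_atBot s_c] with s hs
    exact (key s hs).symm
  -- second part
  set g : ℝ → ℝ := fun s => deriv β s - c₁ with hgdef
  have hgcont : Continuous g := (hβ'.continuous).sub continuous_const
  have hgbound : ∀ s ≤ s_c, |g s| ≤ Real.sqrt B * ∫ u in Set.Iic s, Real.sqrt (K u) := by
    intro s hs
    have hgeq : g s = -(∫ u in Set.Iic s, f u) := by
      simp only [hgdef]; rw [key s hs]; ring
    have habs : |g s| = |∫ u in Set.Iic s, f u| := by rw [hgeq, abs_neg]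
    rw [habs]
    have hfs : IntegrableOn f (Set.Iic s) := hf.mono_set (Set.Iic_subset_Iic.2 hs)
    have hGc : IntegrableOn (fun u => Real.sqrt B * Real.sqrt (K u)) (Set.Iic s_c) :=
      hint₁.const_mul _
    have hGs : IntegrableOn (fun u => Real.sqrt B * Real.sqrt (K u)) (Set.Iic s) :=
      hGc.mono_set (Set.Iic_subset_Iic.2 hs)
    calc |∫ u in Set.Iic s, f u| ≤ ∫ u in Set.Iic s, |f u| := by
          simpa [Real.norm_eq_abs] using
            norm_integral_le_integral_norm (μ := volume.restrict (Set.Iic s)) f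
      _ ≤ ∫ u in Set.Iic s, Real.sqrt B * Real.sqrt (K u) := by
          refine setIntegral_mono_on (hfs.abs) hGs measurableSet_Iic fun u hu => ?_
          exact hbound u (le_trans hu hs)
      _ = Real.sqrt B * ∫ u in Set.Iic s, Real.sqrt (K u) := by
          rw [integral_const_mul]
  have hg : IntegrableOn g (Set.Iic s_c) := by
    refine Integrable.mono' (hint₂.const_mul (Real.sqrt B))
      (hgcont.aestronglyMeasurable.restrict) ?_
    refine (ae_restrict_iff' measurableSet_Iic).2 (ae_of_all _ fun s hs => ?_)
    simpa [Real.norm_eq_abs] using hgbound s hs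
  have key₂ : ∀ s ≤ s_c, β s - c₁ * s =
      (β s_c - c₁ * s_c - ∫ u in Set.Iic s_c, g u) + ∫ u in Set.Iic s, g u := by
    intro s hs
    have hft : ∫ t in s..s_c, deriv β t = β s_c - β s := by
      refine intervalIntegral.integral_deriv_eq_sub (fun x _ => hβ x) ?_
      exact (hβ'.continuous).intervalIntegrable _ _
    have hgs : IntegrableOn g (Set.Iic s) := hg.mono_set (Set.Iic_subset_Iic.2 hs)
    have hIic : (∫ t in s..s_c, g t) =
        (∫ u in Set.Iic s_c, g u) - ∫ u in Set.Iic s, g u :=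
      (intervalIntegral.integral_Iic_sub_Iic hgs hg).symm
    have hgint : ∫ t in s..s_c, g t = (β s_c - β s) - c₁ * (s_c - s) := by
      rw [hgdef]
      rw [intervalIntegral.integral_sub ((hβ'.continuous).intervalIntegrable _ _)
        (intervalIntegrable_const)]
      rw [hft, intervalIntegral.integral_const]
      simp [smul_eq_mul]; ring
    rw [hgint] at hIic
    linarith
  refine ⟨c₁, (β s_c - c₁ * s_c - ∫ u in Set.Iic s_c, g u), htend₁, ?_⟩
  have h0 : Tendsto (fun s => (β s_c - c₁ * s_c - ∫ u in Set.Iic s_c, g u)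
      + ∫ u in Set.Iic s, g u) atBot
      (𝓝 ((β s_c - c₁ * s_c - ∫ u in Set.Iic s_c, g u) + 0)) :=
    tendsto_const_nhds.add (tendsto_integral_Iic_atBot hg)
  rw [add_zero] at h0
  refine h0.congr' ?_
  filter_upwards [eventually_le_atBot s_c] with s hs
  exact (key₂ s hs).symm
end

section
/- Let p = (p₁, p₂, p₃) ∈ ℝ³ satisfy p₁ + p₂ + p₃ = 1 and p₁² + p₂² + p₃² = 1, and let ω = (ω₁, ω₂, ω₃) ∈ ℝ³ be such that for every index j with p_j = 1 one has ω_j = 0. Let α : (0,∞) → ℂ be twice differentiable and satisfy the mode ODE α''(t) + α'(t)/t + 4π² (Σ_{j=1}^{3} ω_j² t^{-2p_j}) α(t) = 0 for all t > 0. Then there exist constants c₁, c₂ ∈ ℂ such that α(t) − (c₁ ln t + c₂) → 0 as t → 0⁺. -/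
open Real Filter Finset

lemma norm_sq_eq_c (z : ℂ) : ‖z‖ ^ 2 = z.re ^ 2 + z.im ^ 2 := by
  rw [Complex.sq_norm, Complex.normSq_apply]; ring

lemma energy_ineq (ar ai br bi g P t eps Cc : ℝ) (ht : 0 < t) (heps : 0 < eps)
    (hg0 : 0 ≤ g) (hg1 : g ≤ Cc * P) :
    0 ≤ eps ^ 2 * (2 * ar * (br / t) + 2 * ai * (bi / t))
      + (2 * br * (-(g * ar)) + 2 * bi * (-(g * ai)))
      + (eps / t + Cc / eps * P) * (eps ^ 2 * (ar ^ 2 + ai ^ 2) + (br ^ 2 + bi ^ 2)) := by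
  have hS1 : 0 ≤ eps ^ 2 * (ar ^ 2 + ai ^ 2) + (br ^ 2 + bi ^ 2)
      + 2 * eps * (ar * br + ai * bi) := by
    nlinarith [sq_nonneg (eps * ar + br), sq_nonneg (eps * ai + bi)]
  have hS2 : 0 ≤ eps ^ 2 * (ar ^ 2 + ai ^ 2) + (br ^ 2 + bi ^ 2)
      - 2 * eps * (ar * br + ai * bi) := by
    nlinarith [sq_nonneg (eps * ar - br), sq_nonneg (eps * ai - bi)]
  have hEq : eps ^ 2 * (2 * ar * (br / t) + 2 * ai * (bi / t))
      + (2 * br * (-(g * ar)) + 2 * bi * (-(g * ai)))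
      + (eps / t + Cc / eps * P) * (eps ^ 2 * (ar ^ 2 + ai ^ 2) + (br ^ 2 + bi ^ 2))
      = (eps / t) * ((eps ^ 2 * (ar ^ 2 + ai ^ 2) + (br ^ 2 + bi ^ 2))
          + 2 * eps * (ar * br + ai * bi))
      + (g / eps) * ((eps ^ 2 * (ar ^ 2 + ai ^ 2) + (br ^ 2 + bi ^ 2))
          - 2 * eps * (ar * br + ai * bi))
      + ((Cc * P - g) / eps) * (eps ^ 2 * (ar ^ 2 + ai ^ 2) + (br ^ 2 + bi ^ 2)) := by
    field_simp
    ring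
  rw [hEq]
  have h1 : 0 ≤ (eps / t) * ((eps ^ 2 * (ar ^ 2 + ai ^ 2) + (br ^ 2 + bi ^ 2))
      + 2 * eps * (ar * br + ai * bi)) := mul_nonneg (div_nonneg heps.le ht.le) hS1
  have h2 : 0 ≤ (g / eps) * ((eps ^ 2 * (ar ^ 2 + ai ^ 2) + (br ^ 2 + bi ^ 2))
      - 2 * eps * (ar * br + ai * bi)) := mul_nonneg (div_nonneg hg0 heps.le) hS2
  have h3 : 0 ≤ ((Cc * P - g) / eps) * (eps ^ 2 * (ar ^ 2 + ai ^ 2) + (br ^ 2 + bi ^ 2)) :=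
    mul_nonneg (div_nonneg (by linarith) heps.le) (by positivity)
  linarith

lemma aux_conv (F B : ℝ → ℂ) (c g : ℝ) (hc : 0 < c) (hg : 0 ≤ g)
    (hFd : ∀ t ∈ Set.Ioi (0:ℝ), HasDerivAt F (B t) t)
    (hBc : ContinuousOn B (Set.Ioi 0))
    (hBb : ∀ t ∈ Set.Ioc (0:ℝ) 1, ‖B t‖ ≤ g * t ^ (c - 1)) :
    ∃ c₂ : ℂ, ∀ t ∈ Set.Ioc (0:ℝ) 1, ‖F t - c₂‖ ≤ (g / c) * t ^ c := by
  have hgint : MeasureTheory.IntegrableOn (fun s : ℝ => g * s ^ (c-1)) (Set.Ioc 0 1)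
      MeasureTheory.volume := by
    rw [← intervalIntegrable_iff_integrableOn_Ioc_of_le zero_le_one]
    exact (intervalIntegral.intervalIntegrable_rpow' (by linarith)).const_mul g
  have hBmeas : MeasureTheory.AEStronglyMeasurable B
      (MeasureTheory.volume.restrict (Set.Ioc (0:ℝ) 1)) :=
    (hBc.mono Set.Ioc_subset_Ioi_self).aestronglyMeasurable measurableSet_Ioc
  have hBint : MeasureTheory.IntegrableOn B (Set.Ioc (0:ℝ) 1) MeasureTheory.volume := by
    refine MeasureTheory.Integrable.mono' hgint hBmeas ?_
    exact (MeasureTheory.ae_restrict_iff' measurableSet_Ioc).2 (.of_forall hBb)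
  refine ⟨F 1 - ∫ s in Set.Ioc (0:ℝ) 1, B s, ?_⟩
  rintro t ⟨ht, ht1⟩
  have hIcc : Set.uIcc t 1 ⊆ Set.Ioi (0:ℝ) := by
    rw [Set.uIcc_of_le ht1]
    exact fun x hx => lt_of_lt_of_le ht hx.1
  have hFt : ∫ s in t..1, B s = F 1 - F t := by
    refine intervalIntegral.integral_eq_sub_of_hasDerivAt (fun x hx => hFd x (hIcc hx)) ?_
    exact (hBc.mono hIcc).intervalIntegrable
  rw [intervalIntegral.integral_of_le ht1] at hFt
  have hsplit : (∫ s in Set.Ioc (0:ℝ) 1, B s)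
      = (∫ s in Set.Ioc (0:ℝ) t, B s) + ∫ s in Set.Ioc t 1, B s := by
    rw [← MeasureTheory.setIntegral_union (Set.Ioc_disjoint_Ioc_of_le le_rfl) measurableSet_Ioc
      (hBint.mono_set (Set.Ioc_subset_Ioc le_rfl ht1))
      (hBint.mono_set (Set.Ioc_subset_Ioc ht.le le_rfl)),
      Set.Ioc_union_Ioc_eq_Ioc ht.le ht1]
  have hkey : F t - (F 1 - ∫ s in Set.Ioc (0:ℝ) 1, B s) = ∫ s in Set.Ioc (0:ℝ) t, B s := by
    linear_combination hsplit + hFt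
  rw [hkey]
  have hb2 : ∀ᵐ s ∂(MeasureTheory.volume.restrict (Set.Ioc (0:ℝ) t)),
      ‖B s‖ ≤ g * s ^ (c-1) := by
    refine (MeasureTheory.ae_restrict_iff' measurableSet_Ioc).2 (.of_forall ?_)
    exact fun s hs => hBb s ⟨hs.1, hs.2.trans ht1⟩
  calc ‖∫ s in Set.Ioc (0:ℝ) t, B s‖ ≤ ∫ s in Set.Ioc (0:ℝ) t, g * s ^ (c-1) :=
        MeasureTheory.norm_integral_le_of_norm_le
          (hgint.mono_set (Set.Ioc_subset_Ioc le_rfl ht1)) hb2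
    _ = (g / c) * t ^ c := by
        rw [← intervalIntegral.integral_of_le ht.le, intervalIntegral.integral_const_mul,
          integral_rpow (Or.inl (by linarith : (-1:ℝ) < c - 1))]
        have h1 : c - 1 + 1 = c := by ring
        rw [h1, Real.zero_rpow (ne_of_gt hc)]
        ring

set_option maxHeartbeats 1000000 in
theorem small_time_asymptotics_nonresonant (p ω : Fin 3 → ℝ)
    (hsum : ∑ j, p j = 1) (hsq : ∑ j, (p j) ^ 2 = 1)
    (hω : ∀ j, p j = 1 → ω j = 0)
    (α : ℝ → ℂ)
    (hα : ∀ t > (0:ℝ), DifferentiableAt ℝ α t)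
    (hα' : ∀ t > (0:ℝ), DifferentiableAt ℝ (deriv α) t)
    (hode : ∀ t > (0:ℝ), deriv (deriv α) t + deriv α t / (t : ℂ)
        + ((4 * π ^ 2 * ∑ j, (ω j) ^ 2 * t ^ (-(2 * p j)) : ℝ) : ℂ) * α t = 0) :
    ∃ c₁ c₂ : ℂ,
      Tendsto (fun t : ℝ => α t - (c₁ * (Real.log t : ℂ) + c₂))
        (nhdsWithin 0 (Set.Ioi 0)) (nhds 0) := by
  classical
  set f : ℝ → ℝ := fun t => 4 * π ^ 2 * ∑ j, (ω j) ^ 2 * t ^ (-(2 * p j)) with hf_def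
  have hpj : ∀ j, ω j ≠ 0 → p j < 1 := by
    intro j hj
    have h1 : p j ≠ 1 := fun h => hj (hω j h)
    have h2 : (p j) ^ 2 ≤ 1 := by
      rw [← hsq]
      exact Finset.single_le_sum (fun i _ => sq_nonneg (p i)) (Finset.mem_univ j)
    have h3 : p j ≤ 1 := by nlinarith [sq_nonneg (p j - 1)]
    exact lt_of_le_of_ne h3 h1
  set e : Fin 3 → ℝ := fun j => if ω j = 0 then 1 else 2 - 2 * p j with he_def
  have he_pos : ∀ j, 0 < e j := by
    intro j
    simp only [he_def]
    by_cases h : ω j = 0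
    · simp [h]
    · simp only [if_neg h]
      have := hpj j h
      linarith
  set l : ℝ := min (e 0) (min (e 1) (e 2)) with hl_def
  have hl : 0 < l := lt_min (he_pos 0) (lt_min (he_pos 1) (he_pos 2))
  have hle : ∀ j, l ≤ e j := by
    intro j
    fin_cases j
    · exact min_le_left _ _
    · exact (min_le_right _ _).trans (min_le_left _ _)
    · exact (min_le_right _ _).trans (min_le_right _ _)
  set C : ℝ := 4 * π ^ 2 * ∑ j, (ω j) ^ 2 with hC_def
  have hC : 0 ≤ C := by
    rw [hC_def]
    apply mul_nonneg (by positivity)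
    exact Finset.sum_nonneg fun j _ => sq_nonneg _
  set ε : ℝ := l / 2 with hε_def
  have hε : 0 < ε := by rw [hε_def]; positivity
  have hf_nonneg : ∀ t : ℝ, 0 < t → 0 ≤ f t := by
    intro t ht
    rw [hf_def]
    apply mul_nonneg (by positivity)
    exact Finset.sum_nonneg fun j _ => mul_nonneg (sq_nonneg _) (Real.rpow_nonneg ht.le _)
  have htf : ∀ t : ℝ, 0 < t → t ≤ 1 → t * f t ≤ C * t ^ (l - 1) := by
    intro t ht ht1
    have hstep : ∀ j : Fin 3, (ω j) ^ 2 * (t * t ^ (-(2 * p j))) ≤ (ω j) ^ 2 * t ^ (l - 1) := by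
      intro j
      by_cases h : ω j = 0
      · simp [h]
      · refine mul_le_mul_of_nonneg_left ?_ (sq_nonneg _)
        have h1 : t * t ^ (-(2 * p j)) = t ^ (1 + -(2 * p j)) := by
          rw [Real.rpow_add ht, Real.rpow_one]
        rw [h1]
        apply Real.rpow_le_rpow_of_exponent_ge ht ht1
        have h2 := hle j
        simp only [he_def, if_neg h] at h2
        linarith
    have hre : t * f t = 4 * π ^ 2 * ∑ j, (ω j) ^ 2 * (t * t ^ (-(2 * p j))) := by
      simp only [hf_def, Finset.mul_sum]
      exact Finset.sum_congr rfl fun j _ => by ring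
    rw [hre]
    calc 4 * π ^ 2 * ∑ j, (ω j) ^ 2 * (t * t ^ (-(2 * p j)))
        ≤ 4 * π ^ 2 * ∑ j, (ω j) ^ 2 * t ^ (l - 1) :=
          mul_le_mul_of_nonneg_left (Finset.sum_le_sum fun j _ => hstep j) (by positivity)
      _ = C * t ^ (l - 1) := by rw [hC_def, ← Finset.sum_mul]; ring
  -- rewrite the ODE
  have hode' : ∀ t : ℝ, 0 < t →
      (t : ℂ) * deriv (deriv α) t = -(deriv α t) - ((t * f t : ℝ) : ℂ) * α t := by
    intro t ht
    have h := hode t ht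
    have htne : (t : ℂ) ≠ 0 := Complex.ofReal_ne_zero.2 (ne_of_gt ht)
    have hff : ((t * f t : ℝ) : ℂ) = (t : ℂ) * ((4 * π ^ 2 * ∑ j, (ω j) ^ 2 *
        t ^ (-(2 * p j)) : ℝ) : ℂ) := by
      rw [hf_def]; push_cast; ring
    rw [hff]
    field_simp at h ⊢
    linear_combination h
  set β : ℝ → ℂ := fun t => (t : ℂ) * deriv α t with hβ_def
  set B : ℝ → ℂ := fun t => -(((t * f t : ℝ)) : ℂ) * α t with hB_def
  have hβd : ∀ t : ℝ, 0 < t → HasDerivAt β (B t) t := by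
    intro t ht
    have h1 : HasDerivAt (fun s : ℝ => (s : ℂ)) 1 t := by
      exact (hasDerivAt_id t).ofReal_comp
    have h2 := h1.mul (hα' t ht).hasDerivAt
    have h3 : 1 * deriv α t + (t : ℂ) * deriv (deriv α) t = B t := by
      rw [hB_def, one_mul, hode' t ht]; ring
    rw [hβ_def, ← h3]
    exact h2
  have hf_cont : ∀ t : ℝ, 0 < t → ContinuousAt f t := by
    intro t ht
    rw [hf_def]
    apply ContinuousAt.mul continuousAt_const
    exact tendsto_finset_sum _ fun j _ => ContinuousAt.mul continuousAt_const
      (Real.continuousAt_rpow_const t _ (Or.inl (ne_of_gt ht)))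
  have hα_cont : ∀ t : ℝ, 0 < t → ContinuousAt α t := fun t ht => (hα t ht).continuousAt
  have hβ_cont : ∀ t : ℝ, 0 < t → ContinuousAt β t := fun t ht => (hβd t ht).continuousAt
  have hB_cont : ContinuousOn B (Set.Ioi 0) := by
    intro t ht
    apply ContinuousAt.continuousWithinAt
    rw [hB_def]
    refine ContinuousAt.mul ?_ (hα_cont t ht)
    refine ContinuousAt.neg ?_
    exact Complex.continuous_ofReal.continuousAt.comp
      (continuousAt_id.mul (hf_cont t ht))
  -- energy function
  set E : ℝ → ℝ := fun t => ε ^ 2 * ((α t).re ^ 2 + (α t).im ^ 2)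
    + ((β t).re ^ 2 + (β t).im ^ 2) with hE_def
  set V : ℝ → ℝ := fun t => ε * Real.log t + (C / (ε * l)) * t ^ l with hV_def
  set Φ : ℝ → ℝ := fun t => E t * Real.exp (V t) with hΦ_def
  have hE_nonneg : ∀ t, 0 ≤ E t := fun t => by rw [hE_def]; positivity
  have hEd : ∀ t : ℝ, 0 < t → HasDerivAt E
      (ε ^ 2 * (2 * (α t).re * (deriv α t).re + 2 * (α t).im * (deriv α t).im)
        + (2 * (β t).re * (B t).re + 2 * (β t).im * (B t).im)) t := by
    intro t ht
    have har : HasDerivAt (fun s => (α s).re) ((deriv α t).re) t :=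
      Complex.reCLM.hasFDerivAt.comp_hasDerivAt t (hα t ht).hasDerivAt
    have hai : HasDerivAt (fun s => (α s).im) ((deriv α t).im) t :=
      Complex.imCLM.hasFDerivAt.comp_hasDerivAt t (hα t ht).hasDerivAt
    have hbr : HasDerivAt (fun s => (β s).re) ((B t).re) t :=
      Complex.reCLM.hasFDerivAt.comp_hasDerivAt t (hβd t ht)
    have hbi : HasDerivAt (fun s => (β s).im) ((B t).im) t :=
      Complex.imCLM.hasFDerivAt.comp_hasDerivAt t (hβd t ht)
    have h := (((har.pow 2).add (hai.pow 2)).const_mul (ε ^ 2)).add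
      ((hbr.pow 2).add (hbi.pow 2))
    rw [hE_def]
    refine h.congr_deriv ?_
    push_cast
    ring
  have hVd : ∀ t : ℝ, 0 < t → HasDerivAt V (ε / t + C / ε * t ^ (l - 1)) t := by
    intro t ht
    have h1 := (Real.hasDerivAt_log (ne_of_gt ht)).const_mul ε
    have h2 := (Real.hasDerivAt_rpow_const (x := t) (p := l)
      (Or.inl (ne_of_gt ht))).const_mul (C / (ε * l))
    have h := h1.add h2
    rw [hV_def]
    refine h.congr_deriv ?_
    field_simp [ne_of_gt ht, ne_of_gt hε, ne_of_gt hl]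
  have hΦd : ∀ t : ℝ, 0 < t → HasDerivAt Φ
      ((ε ^ 2 * (2 * (α t).re * (deriv α t).re + 2 * (α t).im * (deriv α t).im)
        + (2 * (β t).re * (B t).re + 2 * (β t).im * (B t).im)
        + (ε / t + C / ε * t ^ (l - 1)) * E t) * Real.exp (V t)) t := by
    intro t ht
    have h := (hEd t ht).mul ((hVd t ht).exp)
    rw [hΦ_def]
    refine h.congr_deriv ?_
    ring
  have hΦ_nonneg : ∀ t ∈ Set.Ioo (0:ℝ) 1, 0 ≤ deriv Φ t := by
    rintro t ⟨ht, ht1⟩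
    rw [(hΦd t ht).deriv]
    apply mul_nonneg _ (Real.exp_nonneg _)
    have hdr : (deriv α t).re = (β t).re / t := by
      rw [hβ_def]
      simp only [Complex.re_ofReal_mul]
      rw [mul_div_cancel_left₀ _ (ne_of_gt ht)]
    have hdi : (deriv α t).im = (β t).im / t := by
      rw [hβ_def]
      simp only [Complex.im_ofReal_mul]
      rw [mul_div_cancel_left₀ _ (ne_of_gt ht)]
    have hBre : (B t).re = -(t * f t * (α t).re) := by
      rw [hB_def]
      simp [Complex.re_ofReal_mul]
    have hBim : (B t).im = -(t * f t * (α t).im) := by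
      rw [hB_def]
      simp [Complex.im_ofReal_mul]
    have hEt : E t = ε ^ 2 * ((α t).re ^ 2 + (α t).im ^ 2)
        + ((β t).re ^ 2 + (β t).im ^ 2) := by rw [hE_def]
    rw [hdr, hdi, hBre, hBim, hEt]
    exact energy_ineq _ _ _ _ _ _ _ _ _ ht hε
      (mul_nonneg ht.le (hf_nonneg t ht)) (htf t ht ht1.le)
  have hΦmono : MonotoneOn Φ (Set.Ioc 0 1) := by
    apply monotoneOn_of_deriv_nonneg (convex_Ioc 0 1)
    · intro t ht
      exact ((hΦd t ht.1).continuousAt).continuousWithinAt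
    · rw [interior_Ioc]
      intro t ht
      exact (hΦd t ht.1).differentiableAt.differentiableWithinAt
    · rw [interior_Ioc]
      exact hΦ_nonneg
  set K : ℝ := Φ 1 with hK_def
  have hK : 0 ≤ K := by
    rw [hK_def, hΦ_def]
    exact mul_nonneg (hE_nonneg 1) (Real.exp_nonneg _)
  have hE_bound : ∀ t : ℝ, 0 < t → t ≤ 1 → E t ≤ K * (t ^ ε)⁻¹ := by
    intro t ht ht1
    have h1 : Φ t ≤ K := hΦmono ⟨ht, ht1⟩ ⟨one_pos, le_rfl⟩ ht1
    have ht_pos : (0:ℝ) < t ^ ε := Real.rpow_pos_of_pos ht _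
    have h2 : Real.exp (V t) = t ^ ε * Real.exp ((C / (ε * l)) * t ^ l) := by
      rw [hV_def]
      simp only
      rw [Real.exp_add]
      congr 1
      rw [Real.rpow_def_of_pos ht, mul_comm]
    have h4 : 1 ≤ Real.exp ((C / (ε * l)) * t ^ l) := by
      rw [Real.one_le_exp_iff]
      have h5 : (0:ℝ) ≤ t ^ l := Real.rpow_nonneg ht.le _
      positivity
    have h5 : E t * t ^ ε ≤ K := by
      calc E t * t ^ ε ≤ E t * t ^ ε * Real.exp ((C / (ε * l)) * t ^ l) :=
            le_mul_of_one_le_right (mul_nonneg (hE_nonneg t) ht_pos.le) h4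
        _ = Φ t := by rw [hΦ_def]; simp only; rw [h2]; ring
        _ ≤ K := h1
    calc E t = E t * t ^ ε * (t ^ ε)⁻¹ := by
          rw [mul_assoc, mul_inv_cancel₀ (ne_of_gt ht_pos), mul_one]
      _ ≤ K * (t ^ ε)⁻¹ := mul_le_mul_of_nonneg_right h5 (inv_nonneg.2 ht_pos.le)
  set A : ℝ := Real.sqrt K / ε with hA_def
  have hA : 0 ≤ A := div_nonneg (Real.sqrt_nonneg _) hε.le
  have hα_bound : ∀ t : ℝ, 0 < t → t ≤ 1 → ‖α t‖ ≤ A * t ^ (-(ε / 2)) := by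
    intro t ht ht1
    have hrhs : 0 ≤ A * t ^ (-(ε / 2)) := mul_nonneg hA (Real.rpow_nonneg ht.le _)
    have hEα : ε ^ 2 * ‖α t‖ ^ 2 ≤ E t := by
      simp only [hE_def, norm_sq_eq_c]
      nlinarith [sq_nonneg (β t).re, sq_nonneg (β t).im]
    have h6 : t ^ (-ε) = (t ^ ε)⁻¹ := Real.rpow_neg ht.le ε
    have hsq2 : (A * t ^ (-(ε / 2))) ^ 2 = K / ε ^ 2 * (t ^ ε)⁻¹ := by
      rw [mul_pow, hA_def, div_pow, Real.sq_sqrt hK,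
        ← Real.rpow_natCast (t ^ (-(ε / 2))) 2, ← Real.rpow_mul ht.le, ← h6]
      congr 2
      push_cast
      ring
    have hsq : ‖α t‖ ^ 2 ≤ (A * t ^ (-(ε / 2))) ^ 2 := by
      rw [hsq2, div_mul_eq_mul_div, le_div_iff₀ (by positivity : (0:ℝ) < ε ^ 2)]
      calc ‖α t‖ ^ 2 * ε ^ 2 = ε ^ 2 * ‖α t‖ ^ 2 := by ring
        _ ≤ E t := hEα
        _ ≤ K * (t ^ ε)⁻¹ := hE_bound t ht ht1
    have h7 := Real.sqrt_le_sqrt hsq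
    rwa [Real.sqrt_sq (norm_nonneg _), Real.sqrt_sq hrhs] at h7
  set m : ℝ := 3 * l / 4 with hm_def
  have hm : 0 < m := by rw [hm_def]; positivity
  have hB_bound : ∀ t ∈ Set.Ioc (0:ℝ) 1, ‖B t‖ ≤ C * A * t ^ (m - 1) := by
    rintro t ⟨ht, ht1⟩
    have hg0 : 0 ≤ t * f t := mul_nonneg ht.le (hf_nonneg t ht)
    have hnB : ‖B t‖ = (t * f t) * ‖α t‖ := by
      simp only [hB_def, norm_mul, norm_neg, Complex.norm_real, Real.norm_eq_abs]
      rw [abs_of_pos ht, abs_of_nonneg (hf_nonneg t ht)]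
    rw [hnB]
    have h1 : (t * f t) * ‖α t‖ ≤ (C * t ^ (l - 1)) * (A * t ^ (-(ε / 2))) :=
      mul_le_mul (htf t ht ht1) (hα_bound t ht ht1) (norm_nonneg _)
        (mul_nonneg hC (Real.rpow_nonneg ht.le _))
    refine h1.trans (le_of_eq ?_)
    have h2 : t ^ (l - 1) * t ^ (-(ε / 2)) = t ^ (m - 1) := by
      rw [← Real.rpow_add ht]
      congr 1
      rw [hε_def, hm_def]
      ring
    calc (C * t ^ (l - 1)) * (A * t ^ (-(ε / 2)))
        = C * A * (t ^ (l - 1) * t ^ (-(ε / 2))) := by ring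
      _ = C * A * t ^ (m - 1) := by rw [h2]
  obtain ⟨c₁, hc₁⟩ := aux_conv β B m (C * A) hm (mul_nonneg hC hA)
    (fun t ht => hβd t ht) hB_cont hB_bound
  set γ : ℝ → ℂ := fun t => α t - c₁ * (Real.log t : ℂ) with hγ_def
  set G : ℝ → ℂ := fun t => (β t - c₁) / (t : ℂ) with hG_def
  have hγd : ∀ t ∈ Set.Ioi (0:ℝ), HasDerivAt γ (G t) t := by
    intro t ht
    rw [Set.mem_Ioi] at ht
    have htne : (t : ℂ) ≠ 0 := Complex.ofReal_ne_zero.2 (ne_of_gt ht)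
    have h1 := (hα t ht).hasDerivAt
    have h2 : HasDerivAt (fun s : ℝ => ((Real.log s : ℝ) : ℂ)) (((t⁻¹ : ℝ) : ℂ)) t :=
      (Real.hasDerivAt_log (ne_of_gt ht)).ofReal_comp
    have h3 := h1.sub (h2.const_mul c₁)
    rw [hγ_def]
    have h4 : G t = deriv α t - c₁ * ((t⁻¹ : ℝ) : ℂ) := by
      rw [hG_def, hβ_def]
      simp only
      rw [div_eq_iff htne]
      push_cast
      have hcanc : ((t : ℂ))⁻¹ * (t : ℂ) = 1 := inv_mul_cancel₀ htne
      linear_combination c₁ * hcanc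
    rw [h4]
    exact h3
  have hG_cont : ContinuousOn G (Set.Ioi 0) := by
    intro t ht
    rw [Set.mem_Ioi] at ht
    apply ContinuousAt.continuousWithinAt
    rw [hG_def]
    exact ((hβ_cont t ht).sub continuousAt_const).div
      (Complex.continuous_ofReal.continuousAt)
      (Complex.ofReal_ne_zero.2 (ne_of_gt ht))
  have hG_bound : ∀ t ∈ Set.Ioc (0:ℝ) 1, ‖G t‖ ≤ (C * A / m) * t ^ (m - 1) := by
    rintro t ⟨ht, ht1⟩
    have h0 : ‖G t‖ = ‖β t - c₁‖ / t := by
      rw [hG_def]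
      simp only [norm_div, Complex.norm_real, Real.norm_eq_abs]
      rw [abs_of_pos ht]
    rw [h0, div_le_iff₀ ht]
    calc ‖β t - c₁‖ ≤ (C * A / m) * t ^ m := hc₁ t ⟨ht, ht1⟩
      _ = (C * A / m) * t ^ (m - 1) * t := by
          have hmm : t ^ m = t ^ (m - 1) * t := by
            rw [← Real.rpow_add_one (ne_of_gt ht)]
            norm_num
          rw [hmm]
          ring
  obtain ⟨c₂, hc₂⟩ := aux_conv γ G m (C * A / m) hm
    (div_nonneg (mul_nonneg hC hA) hm.le) hγd hG_cont hG_bound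
  refine ⟨c₁, c₂, ?_⟩
  apply squeeze_zero_norm' (a := fun t : ℝ => (C * A / m / m) * t ^ m)
  · filter_upwards [Ioo_mem_nhdsGT one_pos] with t ht
    have h1 : α t - (c₁ * (Real.log t : ℂ) + c₂) = γ t - c₂ := by
      rw [hγ_def]; ring
    rw [h1]
    exact hc₂ t ⟨ht.1, ht.2.le⟩
  · have h := (Real.continuousAt_rpow_const 0 m (Or.inr hm.le)).tendsto
    rw [Real.zero_rpow (ne_of_gt hm)] at h
    have h2 := (h.mono_left (nhdsWithin_le_nhds (s := Set.Ioi (0:ℝ)))).const_mul (C * A / m / m)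
    simpa using h2
end

section
/- Let p = (p₁, p₂, p₃) ∈ ℝ³ satisfy p₁ + p₂ + p₃ = 1 and p₁² + p₂² + p₃² = 1, and suppose p_j = 1 for some index j and ω = (ω₁, ω₂, ω₃) ∈ ℝ³ satisfies ω_j ≠ 0. Let α : (0,∞) → ℂ be twice differentiable and satisfy the mode ODE α''(t) + α'(t)/t + 4π² (Σ_{k=1}^{3} ω_k² t^{-2p_k}) α(t) = 0 for all t > 0. Then there exist constants c₁, c₂ ∈ ℂ such that α(t) − (c₁ e^{2πi ω_j ln t} + c₂ e^{−2πi ω_j ln t}) → 0 as t → 0⁺. -/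
open Real Filter Finset MeasureTheory intervalIntegral


lemma integrableOn_exp_two_mul_Iic (c : ℝ) :
    IntegrableOn (fun x => Real.exp (2 * x)) (Set.Iic c) := by
  refine ((integrableOn_exp_Iic c).const_mul (Real.exp c)).mono'
    (Continuous.aestronglyMeasurable (by continuity)) ?_
  filter_upwards [ae_restrict_mem measurableSet_Iic] with x hx
  have : Real.exp (2 * x) = Real.exp x * Real.exp x := by
    rw [two_mul, Real.exp_add]
  rw [Real.norm_eq_abs, abs_of_pos (Real.exp_pos _), this]
  exact mul_le_mul_of_nonneg_right (Real.exp_le_exp.2 hx) (Real.exp_pos _).le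

lemma integral_exp_two (u v : ℝ) :
    ∫ r in u..v, Real.exp (2 * r) = Real.exp (2 * v) / 2 - Real.exp (2 * u) / 2 := by
  have h : ∀ r : ℝ, HasDerivAt (fun r => Real.exp (2 * r) / 2) (Real.exp (2 * r)) r := by
    intro r
    have := (((hasDerivAt_id r).const_mul (2:ℝ)).exp).div_const 2
    simpa [mul_comm, mul_div_assoc] using this
  exact integral_eq_sub_of_hasDerivAt (fun r _ => h r)
    ((Real.continuous_exp.comp (continuous_const.mul continuous_id)).intervalIntegrable u v)

lemma core_asymptotics (a b : ℝ) (ha : a ≠ 0) (hb : 0 ≤ b) (β γ δ : ℝ → ℂ)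
    (hβ : ∀ s, HasDerivAt β (γ s) s) (hγ : ∀ s, HasDerivAt γ (δ s) s)
    (hode : ∀ s, δ s = -(((a:ℂ)^2 + (b:ℂ) * (Real.exp (2*s) : ℂ)) * β s)) :
    ∃ L₁ L₂ : ℂ, Tendsto (fun s => β s -
      (L₁ * Complex.exp (Complex.I * a * s) + L₂ * Complex.exp (-(Complex.I * a * s))))
      atBot (nhds 0) := by
  obtain ⟨A, hA_def⟩ : ∃ A : ℂ, A = Complex.I * a := ⟨_, rfl⟩
  have hA : A ≠ 0 := by
    simp [hA_def, Complex.I_ne_zero, Complex.ofReal_eq_zero, ha]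
  have hA2 : A ^ 2 = -((a:ℂ)^2) := by
    rw [hA_def, mul_pow, Complex.I_sq]; ring
  have hAnorm : ‖A‖ = |a| := by
    simp [hA_def, Complex.norm_real]
  -- unit norm of exponentials
  have hEnorm : ∀ s : ℝ, ‖Complex.exp (A * s)‖ = 1 := by
    intro s
    rw [Complex.norm_exp]
    have : (A * s).re = 0 := by simp [hA_def]
    simp [this]
  have hEnorm' : ∀ s : ℝ, ‖Complex.exp (-(A * s))‖ = 1 := by
    intro s
    rw [Complex.norm_exp]
    have : (-(A * s)).re = 0 := by simp [hA_def]
    simp [this]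
  -- derivative of the exponentials
  have hE : ∀ s : ℝ, HasDerivAt (fun s : ℝ => Complex.exp (A * s)) (A * Complex.exp (A * s)) s := by
    intro s
    have h1 : HasDerivAt (fun z : ℂ => Complex.exp (A * z)) (A * Complex.exp (A * (s:ℂ))) s := by
      simpa [mul_comm] using ((hasDerivAt_id (s:ℂ)).const_mul A).cexp
    exact h1.comp_ofReal
  have hE' : ∀ s : ℝ, HasDerivAt (fun s : ℝ => Complex.exp (-(A * s)))
      (-A * Complex.exp (-(A * s))) s := by
    intro s
    have h1 : HasDerivAt (fun z : ℂ => Complex.exp (-(A * z))) (-A * Complex.exp (-(A * (s:ℂ)))) s := by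
      simpa [mul_comm] using (((hasDerivAt_id (s:ℂ)).const_mul A).neg).cexp
    exact h1.comp_ofReal
  -- variation of constants coefficients
  obtain ⟨c₁, hc₁_def⟩ : ∃ c₁ : ℝ → ℂ,
    c₁ = fun s => (β s + γ s / A) / 2 * Complex.exp (-(A * s)) := ⟨_, rfl⟩
  obtain ⟨c₂, hc₂_def⟩ : ∃ c₂ : ℝ → ℂ,
    c₂ = fun s => (β s - γ s / A) / 2 * Complex.exp (A * s) := ⟨_, rfl⟩
  obtain ⟨d₁, hd₁_def⟩ : ∃ d₁ : ℝ → ℂ,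
    d₁ = fun s => -((b:ℂ) * (Real.exp (2*s) : ℂ) * β s / (2 * A)) * Complex.exp (-(A * s)) := ⟨_, rfl⟩
  obtain ⟨d₂, hd₂_def⟩ : ∃ d₂ : ℝ → ℂ,
    d₂ = fun s => ((b:ℂ) * (Real.exp (2*s) : ℂ) * β s / (2 * A)) * Complex.exp (A * s) := ⟨_, rfl⟩
  have hc₁ : ∀ s, HasDerivAt c₁ (d₁ s) s := by
    intro s
    have h1 : HasDerivAt (fun s => (β s + γ s / A) / 2) ((γ s + δ s / A) / 2) s :=
      ((hβ s).add ((hγ s).div_const A)).div_const 2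
    have h2 := h1.mul (hE' s)
    have heq : (γ s + δ s / A) / 2 * Complex.exp (-(A * s)) +
        (β s + γ s / A) / 2 * (-A * Complex.exp (-(A * s))) = d₁ s := by
      rw [hd₁_def, hode s]
      have ha2 : (a:ℂ)^2 = -(A^2) := by rw [hA2]; ring
      rw [ha2]
      field_simp
      ring
    rw [hc₁_def]
    exact heq ▸ h2
  have hc₂ : ∀ s, HasDerivAt c₂ (d₂ s) s := by
    intro s
    have h1 : HasDerivAt (fun s => (β s - γ s / A) / 2) ((γ s - δ s / A) / 2) s :=
      ((hβ s).sub ((hγ s).div_const A)).div_const 2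
    have h2 := h1.mul (hE s)
    have heq : (γ s - δ s / A) / 2 * Complex.exp (A * s) +
        (β s - γ s / A) / 2 * (A * Complex.exp (A * s)) = d₂ s := by
      rw [hd₂_def, hode s]
      have ha2 : (a:ℂ)^2 = -(A^2) := by rw [hA2]; ring
      rw [ha2]
      field_simp
      ring
    rw [hc₂_def]
    exact heq ▸ h2
  -- reconstruction of β
  have hrec : ∀ s, β s = c₁ s * Complex.exp (A * s) + c₂ s * Complex.exp (-(A * s)) := by
    intro s
    have hmul : Complex.exp (-(A * s)) * Complex.exp (A * s) = 1 := by
      rw [← Complex.exp_add]; simp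
    rw [hc₁_def, hc₂_def]
    simp only []
    calc β s = (β s + γ s / A) / 2 * (Complex.exp (-(A * s)) * Complex.exp (A * s))
          + (β s - γ s / A) / 2 * (Complex.exp (-(A * s)) * Complex.exp (A * s)) := by
            rw [hmul]; ring
      _ = (β s + γ s / A) / 2 * Complex.exp (-(A * s)) * Complex.exp (A * s)
          + (β s - γ s / A) / 2 * Complex.exp (A * s) * Complex.exp (-(A * s)) := by ring
  have hcomb : ∀ (x y : ℂ) (s : ℝ),
      ‖x * Complex.exp (A * s) + y * Complex.exp (-(A * s))‖ ≤ ‖x‖ + ‖y‖ := by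
    intro x y s
    calc ‖x * Complex.exp (A * s) + y * Complex.exp (-(A * s))‖
        ≤ ‖x * Complex.exp (A * s)‖ + ‖y * Complex.exp (-(A * s))‖ := norm_add_le _ _
      _ = ‖x‖ + ‖y‖ := by rw [norm_mul, norm_mul, hEnorm s, hEnorm' s, mul_one, mul_one]
  have hβ_bound : ∀ s, ‖β s‖ ≤ ‖c₁ s‖ + ‖c₂ s‖ := by
    intro s
    rw [hrec s]; exact hcomb _ _ _
  -- continuity facts
  have hβcont : Continuous β := by
    rw [continuous_iff_continuousAt]; exact fun s => (hβ s).continuousAt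
  have hc₁cont : Continuous c₁ := by
    rw [continuous_iff_continuousAt]; exact fun s => (hc₁ s).continuousAt
  have hc₂cont : Continuous c₂ := by
    rw [continuous_iff_continuousAt]; exact fun s => (hc₂ s).continuousAt
  have hexp2cont : Continuous fun s : ℝ => ((Real.exp (2*s) : ℝ) : ℂ) :=
    Complex.continuous_ofReal.comp (Real.continuous_exp.comp (continuous_const.mul continuous_id))
  have hEcont : Continuous fun s : ℝ => Complex.exp (A * s) :=
    Complex.continuous_exp.comp (continuous_const.mul Complex.continuous_ofReal)
  have hE'cont : Continuous fun s : ℝ => Complex.exp (-(A * s)) :=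
    Complex.continuous_exp.comp ((continuous_const.mul Complex.continuous_ofReal).neg)
  have hd₁cont : Continuous d₁ := by
    rw [hd₁_def]
    exact ((((continuous_const.mul hexp2cont).mul hβcont).div_const _).neg).mul hE'cont
  have hd₂cont : Continuous d₂ := by
    rw [hd₂_def]
    exact (((continuous_const.mul hexp2cont).mul hβcont).div_const _).mul hEcont
  -- norm bound on derivatives
  obtain ⟨K, hK_def⟩ : ∃ K : ℝ, K = b / (2 * |a|) := ⟨_, rfl⟩
  have ha' : 0 < |a| := abs_pos.2 ha
  have hK : 0 ≤ K := by rw [hK_def]; positivity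
  have hdnorm : ∀ s, ‖d₁ s‖ = K * Real.exp (2*s) * ‖β s‖ ∧
      ‖d₂ s‖ = K * Real.exp (2*s) * ‖β s‖ := by
    intro s
    have h2A : ‖(2 * A : ℂ)‖ = 2 * |a| := by
      rw [norm_mul, hAnorm]; norm_num
    have hbase : ‖(b:ℂ) * (Real.exp (2*s) : ℂ) * β s / (2 * A)‖
        = K * Real.exp (2*s) * ‖β s‖ := by
      rw [norm_div, norm_mul, norm_mul, h2A, Complex.norm_real, Complex.norm_real,
        Real.norm_eq_abs, Real.norm_eq_abs, abs_of_nonneg hb,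
        abs_of_pos (Real.exp_pos _), hK_def]
      field_simp
    constructor
    · rw [hd₁_def]
      simp only []
      rw [norm_mul, hEnorm' s, mul_one, norm_neg, hbase]
    · rw [hd₂_def]
      simp only []
      rw [norm_mul, hEnorm s, mul_one, hbase]
  have hd₁norm : ∀ s, ‖d₁ s‖ ≤ K * Real.exp (2*s) * (‖c₁ s‖ + ‖c₂ s‖) := by
    intro s
    rw [(hdnorm s).1]
    exact mul_le_mul_of_nonneg_left (hβ_bound s) (by positivity)
  have hd₂norm : ∀ s, ‖d₂ s‖ ≤ K * Real.exp (2*s) * (‖c₁ s‖ + ‖c₂ s‖) := by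
    intro s
    rw [(hdnorm s).2]
    exact mul_le_mul_of_nonneg_left (hβ_bound s) (by positivity)
  -- FTC
  have hFTC₁ : ∀ u v : ℝ, ∫ r in u..v, d₁ r = c₁ v - c₁ u := fun u v =>
    integral_eq_sub_of_hasDerivAt (fun r _ => hc₁ r) (hd₁cont.intervalIntegrable u v)
  have hFTC₂ : ∀ u v : ℝ, ∫ r in u..v, d₂ r = c₂ v - c₂ u := fun u v =>
    integral_eq_sub_of_hasDerivAt (fun r _ => hc₂ r) (hd₂cont.intervalIntegrable u v)
  -- choice of s₀
  obtain ⟨s₀, hs₀_def⟩ : ∃ s₀ : ℝ, s₀ = Real.log (1/(2*K+2)) / 2 := ⟨_, rfl⟩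
  have hpos : (0:ℝ) < 1/(2*K+2) := by positivity
  have he : Real.exp (2*s₀) = 1/(2*K+2) := by
    rw [hs₀_def, show 2 * (Real.log (1/(2*K+2)) / 2) = Real.log (1/(2*K+2)) by ring,
      Real.exp_log hpos]
  have hKs : K * Real.exp (2*s₀) ≤ 1/2 := by
    rw [he, mul_one_div, div_le_iff₀ (by linarith : (0:ℝ) < 2*K+2)]
    linarith
  obtain ⟨D, hD_def⟩ : ∃ D : ℝ, D = ‖c₁ s₀‖ + ‖c₂ s₀‖ := ⟨_, rfl⟩
  have hD : 0 ≤ D := by rw [hD_def]; positivity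
  -- uniform bound by bootstrap
  have key : ∀ s ≤ s₀, ‖c₁ s‖ + ‖c₂ s‖ ≤ 2 * D := by
    intro s hs
    have hfcont : Continuous fun u => ‖c₁ u‖ + ‖c₂ u‖ := hc₁cont.norm.add hc₂cont.norm
    obtain ⟨u, hu, hmax⟩ := isCompact_Icc.exists_isMaxOn (Set.nonempty_Icc.2 hs)
      hfcont.continuousOn
    obtain ⟨M, hM_def⟩ : ∃ M : ℝ, M = ‖c₁ u‖ + ‖c₂ u‖ := ⟨_, rfl⟩
    have hM0 : 0 ≤ M := by rw [hM_def]; positivity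
    have hfle : ∀ w ∈ Set.Icc s s₀, ‖c₁ w‖ + ‖c₂ w‖ ≤ M := fun w hw =>
      le_of_le_of_eq (hmax hw) hM_def.symm
    have hIb : ∀ d : ℝ → ℂ, Continuous d →
        (∀ r, ‖d r‖ ≤ K * Real.exp (2*r) * (‖c₁ r‖ + ‖c₂ r‖)) →
        ∀ w ∈ Set.Icc s s₀, ‖∫ r in w..s₀, d r‖ ≤ M / 4 := by
      intro d hdc hdb w hw
      have hws₀ : w ≤ s₀ := hw.2
      have step1 : ‖∫ r in w..s₀, d r‖ ≤ ∫ r in w..s₀, ‖d r‖ :=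
        intervalIntegral.norm_integral_le_integral_norm hws₀
      have step2 : (∫ r in w..s₀, ‖d r‖) ≤ ∫ r in w..s₀, K * M * Real.exp (2*r) := by
        refine intervalIntegral.integral_mono_on hws₀ (hdc.norm.intervalIntegrable _ _)
          ((continuous_const.mul (Real.continuous_exp.comp
            (continuous_const.mul continuous_id))).intervalIntegrable _ _) ?_
        intro r hr
        calc ‖d r‖ ≤ K * Real.exp (2*r) * (‖c₁ r‖ + ‖c₂ r‖) := hdb r
          _ ≤ K * Real.exp (2*r) * M := mul_le_mul_of_nonneg_left
              (hfle r ⟨le_trans hw.1 hr.1, hr.2⟩) (by positivity)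
          _ = K * M * Real.exp (2*r) := by ring
      have step3 : (∫ r in w..s₀, K * M * Real.exp (2*r))
          = K * M * (Real.exp (2*s₀)/2 - Real.exp (2*w)/2) := by
        rw [intervalIntegral.integral_const_mul, integral_exp_two]
      have step4 : K * M * (Real.exp (2*s₀)/2 - Real.exp (2*w)/2) ≤ M / 4 := by
        have h2 : K * Real.exp (2*s₀) * M ≤ 1/2 * M := mul_le_mul_of_nonneg_right hKs hM0
        have h3 : 0 ≤ K * M * Real.exp (2*w) := by positivity
        have h4 : K * M * (Real.exp (2*s₀)/2 - Real.exp (2*w)/2)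
            = (K * Real.exp (2*s₀) * M)/2 - (K * M * Real.exp (2*w))/2 := by ring
        rw [h4]
        linarith
      calc ‖∫ r in w..s₀, d r‖ ≤ ∫ r in w..s₀, ‖d r‖ := step1
        _ ≤ ∫ r in w..s₀, K * M * Real.exp (2*r) := step2
        _ = K * M * (Real.exp (2*s₀)/2 - Real.exp (2*w)/2) := step3
        _ ≤ M / 4 := step4
    have hb₁ : ‖c₁ u‖ ≤ ‖c₁ s₀‖ + M / 4 := by
      have h := hIb d₁ hd₁cont hd₁norm u hu
      rw [hFTC₁ u s₀] at h
      calc ‖c₁ u‖ = ‖c₁ s₀ - (c₁ s₀ - c₁ u)‖ := by ring_nf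
        _ ≤ ‖c₁ s₀‖ + ‖c₁ s₀ - c₁ u‖ := norm_sub_le _ _
        _ ≤ ‖c₁ s₀‖ + M / 4 := by linarith
    have hb₂ : ‖c₂ u‖ ≤ ‖c₂ s₀‖ + M / 4 := by
      have h := hIb d₂ hd₂cont hd₂norm u hu
      rw [hFTC₂ u s₀] at h
      calc ‖c₂ u‖ = ‖c₂ s₀ - (c₂ s₀ - c₂ u)‖ := by ring_nf
        _ ≤ ‖c₂ s₀‖ + ‖c₂ s₀ - c₂ u‖ := norm_sub_le _ _
        _ ≤ ‖c₂ s₀‖ + M / 4 := by linarith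
    have hMle : M ≤ 2 * D := by
      linarith [hb₁, hb₂, hM_def.le, hM_def.ge, hD_def.le, hD_def.ge]
    exact le_trans (hfle s ⟨le_refl s, hs⟩) hMle
  -- integrability on Iic s₀
  have hintOn : ∀ d : ℝ → ℂ, Continuous d →
      (∀ r, ‖d r‖ ≤ K * Real.exp (2*r) * (‖c₁ r‖ + ‖c₂ r‖)) →
      IntegrableOn d (Set.Iic s₀) := by
    intro d hdc hdb
    refine ((integrableOn_exp_two_mul_Iic s₀).const_mul (K * (2*D))).mono'
      hdc.aestronglyMeasurable ?_
    filter_upwards [ae_restrict_mem measurableSet_Iic] with r hr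
    calc ‖d r‖ ≤ K * Real.exp (2*r) * (‖c₁ r‖ + ‖c₂ r‖) := hdb r
      _ ≤ K * Real.exp (2*r) * (2*D) := mul_le_mul_of_nonneg_left (key r hr) (by positivity)
      _ = K * (2*D) * Real.exp (2*r) := by ring
  have hd₁int := hintOn d₁ hd₁cont hd₁norm
  have hd₂int := hintOn d₂ hd₂cont hd₂norm
  -- limits of c₁, c₂ at -∞
  obtain ⟨L₁, hL₁_def⟩ : ∃ L : ℂ, L = c₁ s₀ - ∫ r in Set.Iic s₀, d₁ r := ⟨_, rfl⟩
  obtain ⟨L₂, hL₂_def⟩ : ∃ L : ℂ, L = c₂ s₀ - ∫ r in Set.Iic s₀, d₂ r := ⟨_, rfl⟩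
  have hc₁tend : Tendsto c₁ atBot (nhds L₁) := by
    have heq : c₁ = fun s => c₁ s₀ - ∫ r in s..s₀, d₁ r := by
      funext s; rw [hFTC₁ s s₀]; ring
    rw [heq, hL₁_def]
    exact tendsto_const_nhds.sub
      (intervalIntegral_tendsto_integral_Iic s₀ hd₁int tendsto_id)
  have hc₂tend : Tendsto c₂ atBot (nhds L₂) := by
    have heq : c₂ = fun s => c₂ s₀ - ∫ r in s..s₀, d₂ r := by
      funext s; rw [hFTC₂ s s₀]; ring
    rw [heq, hL₂_def]
    exact tendsto_const_nhds.sub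
      (intervalIntegral_tendsto_integral_Iic s₀ hd₂int tendsto_id)
  refine ⟨L₁, L₂, ?_⟩
  have hgoal : ∀ s : ℝ, Complex.I * (a:ℂ) * (s:ℂ) = A * s := by
    intro s; rw [hA_def]
  have t1 : Tendsto (fun s => ‖c₁ s - L₁‖) atBot (nhds 0) := by
    have h := (hc₁tend.sub_const L₁).norm
    rw [sub_self, norm_zero] at h
    exact h
  have t2 : Tendsto (fun s => ‖c₂ s - L₂‖) atBot (nhds 0) := by
    have h := (hc₂tend.sub_const L₂).norm
    rw [sub_self, norm_zero] at h
    exact h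
  have t3 : Tendsto (fun s => ‖c₁ s - L₁‖ + ‖c₂ s - L₂‖) atBot (nhds (0 + 0)) := t1.add t2
  rw [add_zero] at t3
  refine squeeze_zero_norm (fun s => ?_) t3
  rw [hgoal s]
  have hrw : β s - (L₁ * Complex.exp (A * s) + L₂ * Complex.exp (-(A * s)))
      = (c₁ s - L₁) * Complex.exp (A * s) + (c₂ s - L₂) * Complex.exp (-(A * s)) := by
    rw [hrec s]; ring
  rw [hrw]
  exact hcomb _ _ s


theorem small_time_asymptotics_flat_resonant (p ω : Fin 3 → ℝ)
    (hsum : ∑ j, p j = 1) (hsq : ∑ j, (p j) ^ 2 = 1)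
    (j : Fin 3) (hpj : p j = 1) (hωj : ω j ≠ 0)
    (α : ℝ → ℂ)
    (hα : ∀ t > (0:ℝ), DifferentiableAt ℝ α t)
    (hα' : ∀ t > (0:ℝ), DifferentiableAt ℝ (deriv α) t)
    (hode : ∀ t > (0:ℝ), deriv (deriv α) t + deriv α t / (t : ℂ)
        + ((4 * π ^ 2 * ∑ k, (ω k) ^ 2 * t ^ (-(2 * p k)) : ℝ) : ℂ) * α t = 0) :
    ∃ c₁ c₂ : ℂ,
      Tendsto (fun t : ℝ => α t
          - (c₁ * Complex.exp (2 * π * Complex.I * (ω j) * (Real.log t : ℂ))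
            + c₂ * Complex.exp (-(2 * π * Complex.I * (ω j) * (Real.log t : ℂ)))))
        (nhdsWithin 0 (Set.Ioi 0)) (nhds 0) := by
  classical
  have h0 : ∀ k, k ≠ j → p k = 0 := by
    intro k hk
    have h2 : (p j)^2 + ∑ i ∈ Finset.univ.erase j, (p i)^2 = 1 := by
      rw [Finset.add_sum_erase _ (fun i => (p i)^2) (Finset.mem_univ j)]; exact hsq
    rw [hpj] at h2
    have h1 : ∑ i ∈ Finset.univ.erase j, (p i)^2 = 0 := by linarith
    have h3 := (Finset.sum_eq_zero_iff_of_nonneg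
      (fun i _ => sq_nonneg (p i))).1 h1 k (Finset.mem_erase.2 ⟨hk, Finset.mem_univ k⟩)
    exact pow_eq_zero_iff two_ne_zero |>.mp h3
  have hπ : (π:ℝ) ≠ 0 := Real.pi_ne_zero
  have ha : (2*π*ω j) ≠ 0 := mul_ne_zero (mul_ne_zero two_ne_zero hπ) hωj
  obtain ⟨a, ha_def⟩ : ∃ a : ℝ, a = 2*π*ω j := ⟨_, rfl⟩
  obtain ⟨b, hb_def⟩ : ∃ b : ℝ, b = 4*π^2 * ∑ k ∈ Finset.univ.erase j, (ω k)^2 := ⟨_, rfl⟩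
  have ha2 : a ≠ 0 := by rw [ha_def]; exact ha
  have hb : 0 ≤ b := by rw [hb_def]; positivity
  -- simplify the potential
  have hsum_eq : ∀ t : ℝ, 0 < t →
      (4 * π ^ 2 * ∑ k, (ω k)^2 * t ^ (-(2 * p k)) : ℝ)
        = a^2 / t^2 + b := by
    intro t ht
    have hsplit : ∑ k, (ω k)^2 * t ^ (-(2 * p k))
        = (ω j)^2 * t ^ (-(2 * p j)) +
          ∑ k ∈ Finset.univ.erase j, (ω k)^2 * t ^ (-(2 * p k)) :=
      (Finset.add_sum_erase _ (fun k => (ω k)^2 * t ^ (-(2 * p k))) (Finset.mem_univ j)).symm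
    have h1 : t ^ (-(2 * p j)) = 1 / t^2 := by
      rw [hpj, mul_one, Real.rpow_neg ht.le,
        show (2:ℝ) = ((2:ℕ):ℝ) by norm_num, Real.rpow_natCast, one_div]
    have h2 : ∀ k ∈ Finset.univ.erase j, (ω k)^2 * t ^ (-(2 * p k)) = (ω k)^2 := by
      intro k hk
      rw [h0 k (Finset.mem_erase.1 hk).1]
      norm_num
    rw [hsplit, h1, Finset.sum_congr rfl h2, ha_def, hb_def]
    field_simp
    ring
  -- derivatives of the log-time mode
  have hβd : ∀ s : ℝ, HasDerivAt (fun s => α (Real.exp s))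
      ((Real.exp s : ℂ) * deriv α (Real.exp s)) s := by
    intro s
    have h1 := ((hα _ (Real.exp_pos s)).hasDerivAt).scomp (x := s) (Real.hasDerivAt_exp s)
    simpa [Function.comp_def, Complex.real_smul] using h1
  have hγd : ∀ s : ℝ, HasDerivAt (fun s => (Real.exp s : ℂ) * deriv α (Real.exp s))
      ((Real.exp s : ℂ) * deriv α (Real.exp s)
        + (Real.exp s : ℂ) * ((Real.exp s : ℂ) * deriv (deriv α) (Real.exp s))) s := by
    intro s
    have h1 : HasDerivAt (fun s : ℝ => ((Real.exp s : ℝ) : ℂ)) ((Real.exp s : ℂ)) s :=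
      (Real.hasDerivAt_exp s).ofReal_comp
    have h2 : HasDerivAt (fun s : ℝ => deriv α (Real.exp s))
        ((Real.exp s : ℂ) * deriv (deriv α) (Real.exp s)) s := by
      have := ((hα' _ (Real.exp_pos s)).hasDerivAt).scomp (x := s) (Real.hasDerivAt_exp s)
      simpa [Function.comp_def, Complex.real_smul] using this
    exact h1.mul h2
  -- the ODE in logarithmic time
  have hmode : ∀ s : ℝ,
      ((Real.exp s : ℂ) * deriv α (Real.exp s)
        + (Real.exp s : ℂ) * ((Real.exp s : ℂ) * deriv (deriv α) (Real.exp s)))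
      = -(((a:ℂ)^2 + (b:ℂ) * ((Real.exp (2*s) : ℝ):ℂ)) * α (Real.exp s)) := by
    intro s
    have ht : (0:ℝ) < Real.exp s := Real.exp_pos s
    have htC : ((Real.exp s : ℝ):ℂ) ≠ 0 := Complex.ofReal_ne_zero.2 (ne_of_gt ht)
    have hE := hode (Real.exp s) ht
    rw [hsum_eq _ ht] at hE
    have h2s : Real.exp (2*s) = (Real.exp s)^2 := by
      rw [two_mul, Real.exp_add, sq]
    rw [h2s]
    push_cast at hE ⊢
    have hexpne : Complex.exp (s:ℂ) ≠ 0 := Complex.exp_ne_zero _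
    field_simp at hE
    refine mul_left_cancel₀ hexpne ?_
    linear_combination (Complex.exp (s:ℂ)) * hE
  obtain ⟨L₁, L₂, hL⟩ := core_asymptotics a b ha2 hb
    (fun s => α (Real.exp s)) _ _ hβd hγd hmode
  refine ⟨L₁, L₂, ?_⟩
  have hcomp := hL.comp Real.tendsto_log_nhdsGT_zero
  refine Filter.Tendsto.congr' ?_ hcomp
  filter_upwards [self_mem_nhdsWithin] with t ht
  have h1 : Real.exp (Real.log t) = t := Real.exp_log ht
  have hexp : Complex.I * ((a : ℝ):ℂ) * ((Real.log t : ℝ):ℂ)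
      = 2 * (π:ℂ) * Complex.I * ((ω j : ℝ):ℂ) * ((Real.log t : ℝ):ℂ) := by
    rw [ha_def]; push_cast; ring
  simp only [Function.comp_apply, h1, hexp]
end

section
/- Let p = (p₁, p₂, p₃) ∈ ℝ³ satisfy p₁ + p₂ + p₃ = 1 and p₁² + p₂² + p₃² = 1, and let ω = (ω₁, ω₂, ω₃) ∈ ℝ³ be such that there is an index j with ω_j ≠ 0 and p_j < 1. Define K_ω(s) := 4π² Σ_{j=1}^{3} ω_j² e^{(2−2p_j)s}. Then for every a ∈ ℝ: (i) the function ψ(s) := K_ω(s)^{-1/4} · (d²/ds²)(K_ω(s)^{-1/4}) is integrable on (a, ∞), and (ii) the function s ↦ K_ω(s)^{1/2} is not integrable on (a, ∞). -/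
open Real Finset MeasureTheory

lemma hasDerivAt_cexp (c s : ℝ) :
    HasDerivAt (fun u : ℝ => Real.exp (c * u)) (Real.exp (c * s) * c) s := by
  simpa using ((hasDerivAt_id s).const_mul c).exp

lemma wkb_aux (K K1 K2 : ℝ → ℝ) (a : ℝ)
    (hK : ∀ s, HasDerivAt K (K1 s) s)
    (hK1 : ∀ s, HasDerivAt K1 (K2 s) s)
    (hK2c : Continuous K2)
    (hKpos : ∀ s, 0 < K s)
    (hK1b : ∀ s, |K1 s| ≤ 4 * K s)
    (hK2b : ∀ s, |K2 s| ≤ 16 * K s)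
    (A ε : ℝ) (hA : 0 < A) (hε : 0 < ε)
    (hlow : ∀ s, A * Real.exp (ε * s) ≤ K s) :
    IntegrableOn
      (fun s : ℝ => K s ^ (-(1:ℝ)/4) * deriv (deriv (fun u : ℝ => K u ^ (-(1:ℝ)/4))) s)
      (Set.Ioi a) ∧
    ¬ IntegrableOn (fun s : ℝ => K s ^ ((1:ℝ)/2)) (Set.Ioi a) := by
  have hKne : ∀ s, K s ≠ 0 := fun s => (hKpos s).ne'
  constructor
  · -- derivatives
    set E : ℝ := -(1:ℝ)/4 - 1 with hE
    set g1 : ℝ → ℝ := fun s => K1 s * (-(1:ℝ)/4) * K s ^ E with hg1def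
    have hg : ∀ s, HasDerivAt (fun u : ℝ => K u ^ (-(1:ℝ)/4)) (g1 s) s :=
      fun s => (hK s).rpow_const (Or.inl (hKne s))
    have hd1 : deriv (fun u : ℝ => K u ^ (-(1:ℝ)/4)) = g1 := funext fun s => (hg s).deriv
    set G2 : ℝ → ℝ := fun s =>
      K2 s * (-(1:ℝ)/4) * K s ^ E + K1 s * (-(1:ℝ)/4) * (K1 s * E * K s ^ (E - 1)) with hG2def
    have hg1 : ∀ s, HasDerivAt g1 (G2 s) s := by
      intro s
      exact ((hK1 s).mul_const (-(1:ℝ)/4)).mul ((hK s).rpow_const (Or.inl (hKne s)))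
    have hd2 : deriv (deriv (fun u : ℝ => K u ^ (-(1:ℝ)/4))) = G2 := by
      rw [hd1]; exact funext fun s => (hg1 s).deriv
    have heq : (fun s : ℝ => K s ^ (-(1:ℝ)/4) * deriv (deriv (fun u : ℝ => K u ^ (-(1:ℝ)/4))) s)
        = fun s => K s ^ (-(1:ℝ)/4) * G2 s := by
      funext s; rw [hd2]
    rw [heq]
    -- continuity
    have hKc : Continuous K := continuous_iff_continuousAt.mpr fun s => (hK s).continuousAt
    have hK1c : Continuous K1 := continuous_iff_continuousAt.mpr fun s => (hK1 s).continuousAt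
    have hq : Continuous fun s => K s ^ (-(1:ℝ)/4) := hKc.rpow_const fun s => Or.inl (hKne s)
    have hr : Continuous fun s => K s ^ E := hKc.rpow_const fun s => Or.inl (hKne s)
    have ht : Continuous fun s => K s ^ (E - 1) := hKc.rpow_const fun s => Or.inl (hKne s)
    have hFc : Continuous fun s => K s ^ (-(1:ℝ)/4) * G2 s := by
      apply hq.mul
      exact ((hK2c.mul continuous_const).mul hr).add
        ((hK1c.mul continuous_const).mul (((hK1c.mul continuous_const).mul ht)))
    -- bound
    have hbound : ∀ s, |K s ^ (-(1:ℝ)/4) * G2 s|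
        ≤ 9 * A ^ (-(1:ℝ)/2) * Real.exp (-(ε/2) * s) := by
      intro s
      set x := K s with hxdef
      have hx : 0 < x := hKpos s
      set q := x ^ (-(1:ℝ)/4) with hqdef
      set r := x ^ E with hrdef
      set t := x ^ (E - 1) with htdef
      have hq0 : 0 < q := Real.rpow_pos_of_pos hx _
      have hr0 : 0 < r := Real.rpow_pos_of_pos hx _
      have ht0 : 0 < t := Real.rpow_pos_of_pos hx _
      have hxr : x * r = q := by
        rw [hqdef, hrdef, show -(1:ℝ)/4 = 1 + E by rw [hE]; ring,
          Real.rpow_add hx, Real.rpow_one]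
      have hxt : x * t = r := by
        rw [hrdef, htdef, show E = 1 + (E - 1) by ring, Real.rpow_add hx, Real.rpow_one]
        ring_nf
      have hqq : q * q = x ^ (-(1:ℝ)/2) := by
        rw [hqdef, ← Real.rpow_add hx]; norm_num
      have hA1 : |K1 s| ≤ 4 * x := hK1b s
      have hA2 : |K2 s| ≤ 16 * x := hK2b s
      have habs1 : |K2 s * (-(1:ℝ)/4) * r| = |K2 s| * (1/4) * r := by
        rw [abs_mul, abs_mul, abs_of_nonneg hr0.le]
        norm_num
      have habs2 : |K1 s * (-(1:ℝ)/4) * (K1 s * E * t)| = |K1 s| * (1/4) * (|K1 s| * (5/4) * t) := by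
        rw [abs_mul, abs_mul, abs_mul, abs_mul, abs_of_nonneg ht0.le, hE]
        norm_num
      have h1 : |K2 s| * (1/4) * r ≤ 4 * q := by
        have h := mul_le_mul_of_nonneg_right hA2 hr0.le
        nlinarith [hxr]
      have h2 : |K1 s| * (1/4) * (|K1 s| * (5/4) * t) ≤ 5 * q := by
        have hA1sq : |K1 s| * |K1 s| ≤ 16 * (x * x) := by nlinarith [abs_nonneg (K1 s)]
        have h := mul_le_mul_of_nonneg_right hA1sq ht0.le
        have hxx : 16 * (x * x) * t = 16 * q := by
          rw [show (16:ℝ) * (x * x) * t = 16 * (x * (x * t)) by ring, hxt, hxr]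
        nlinarith
      have hG2b : |G2 s| ≤ 9 * q := by
        calc |G2 s| ≤ |K2 s * (-(1:ℝ)/4) * r| + |K1 s * (-(1:ℝ)/4) * (K1 s * E * t)| :=
              abs_add_le _ _
          _ ≤ 4 * q + 5 * q := by rw [habs1, habs2]; exact add_le_add h1 h2
          _ = 9 * q := by ring
      have hFb : |q * G2 s| ≤ 9 * x ^ (-(1:ℝ)/2) := by
        rw [abs_mul, abs_of_nonneg hq0.le]
        calc q * |G2 s| ≤ q * (9 * q) := by
              exact mul_le_mul_of_nonneg_left hG2b hq0.le
          _ = 9 * (q * q) := by ring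
          _ = 9 * x ^ (-(1:ℝ)/2) := by rw [hqq]
      have hxlow : x ^ (-(1:ℝ)/2) ≤ A ^ (-(1:ℝ)/2) * Real.exp (-(ε/2) * s) := by
        have h0 : 0 < A * Real.exp (ε * s) := by positivity
        have h := Real.rpow_le_rpow_of_nonpos h0 (hlow s) (by norm_num : (-(1:ℝ)/2) ≤ 0)
        calc x ^ (-(1:ℝ)/2) ≤ (A * Real.exp (ε * s)) ^ (-(1:ℝ)/2) := h
          _ = A ^ (-(1:ℝ)/2) * Real.exp (ε * s) ^ (-(1:ℝ)/2) :=
              Real.mul_rpow hA.le (Real.exp_pos _).le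
          _ = A ^ (-(1:ℝ)/2) * Real.exp (-(ε/2) * s) := by
              rw [Real.rpow_def_of_pos (Real.exp_pos _), Real.log_exp]
              congr 1; ring
      calc |q * G2 s| ≤ 9 * x ^ (-(1:ℝ)/2) := hFb
        _ ≤ 9 * (A ^ (-(1:ℝ)/2) * Real.exp (-(ε/2) * s)) := by
            exact mul_le_mul_of_nonneg_left hxlow (by norm_num)
        _ = 9 * A ^ (-(1:ℝ)/2) * Real.exp (-(ε/2) * s) := by ring
    -- integrability by domination
    have hint : IntegrableOn (fun s : ℝ => 9 * A ^ (-(1:ℝ)/2) * Real.exp (-(ε/2) * s))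
        (Set.Ioi a) :=
      (exp_neg_integrableOn_Ioi a (by positivity : 0 < ε/2)).const_mul _
    exact hint.mono' hFc.aestronglyMeasurable
      (ae_of_all _ fun s => by rw [Real.norm_eq_abs]; exact hbound s)
  · -- non-integrability
    intro h
    set C := (A * Real.exp (ε * a)) ^ ((1:ℝ)/2) with hCdef
    have hC : 0 < C := Real.rpow_pos_of_pos (by positivity) _
    have hCle : ∀ s ∈ Set.Ioi a, C ≤ K s ^ ((1:ℝ)/2) := by
      intro s hs
      have h1 : Real.exp (ε * a) ≤ Real.exp (ε * s) :=
        Real.exp_le_exp.mpr (by nlinarith [Set.mem_Ioi.mp hs])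
      have hcle : A * Real.exp (ε * a) ≤ K s := by
        calc A * Real.exp (ε * a) ≤ A * Real.exp (ε * s) :=
              mul_le_mul_of_nonneg_left h1 hA.le
          _ ≤ K s := hlow s
      exact Real.rpow_le_rpow (by positivity) hcle (by norm_num)
    have hconst : IntegrableOn (fun _ : ℝ => C) (Set.Ioi a) := by
      apply h.mono' aestronglyMeasurable_const
      filter_upwards [ae_restrict_mem measurableSet_Ioi] with s hs
      rw [Real.norm_eq_abs, abs_of_nonneg hC.le]
      exact hCle s hs
    rw [integrableOn_const_iff] at hconst
    rcases hconst with h1 | h2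
    · exact hC.ne' (by simpa using h1)
    · exact absurd h2 (by rw [Real.volume_Ioi]; exact lt_irrefl _)


theorem wkb_hypotheses_hold_for_kasner (p ω : Fin 3 → ℝ)
    (hsum : ∑ j, p j = 1) (hsq : ∑ j, (p j) ^ 2 = 1)
    (j : Fin 3) (hωj : ω j ≠ 0) (hpj : p j < 1) :
    ∀ a : ℝ,
      IntegrableOn
        (fun s : ℝ =>
          (4 * π ^ 2 * ∑ k, (ω k) ^ 2 * Real.exp ((2 - 2 * p k) * s)) ^ (-(1:ℝ)/4)
            * deriv (deriv (fun u : ℝ =>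
                (4 * π ^ 2 * ∑ k, (ω k) ^ 2 * Real.exp ((2 - 2 * p k) * u)) ^ (-(1:ℝ)/4))) s)
        (Set.Ioi a) ∧
      ¬ IntegrableOn
        (fun s : ℝ =>
          (4 * π ^ 2 * ∑ k, (ω k) ^ 2 * Real.exp ((2 - 2 * p k) * s)) ^ ((1:ℝ)/2))
        (Set.Ioi a) := by
  intro a
  -- basic facts about the exponents
  have hpk2 : ∀ k, (p k) ^ 2 ≤ 1 := by
    intro k
    calc (p k) ^ 2 ≤ ∑ i, (p i) ^ 2 :=
          Finset.single_le_sum (f := fun i => (p i) ^ 2) (fun i _ => sq_nonneg _) (mem_univ k)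
      _ = 1 := hsq
  have hc0 : ∀ k, 0 ≤ 2 - 2 * p k := fun k => by nlinarith [hpk2 k, sq_nonneg (p k - 1)]
  have hc4 : ∀ k, 2 - 2 * p k ≤ 4 := fun k => by nlinarith [hpk2 k, sq_nonneg (p k + 1)]
  set K : ℝ → ℝ := fun s => 4 * π ^ 2 * ∑ k, (ω k) ^ 2 * Real.exp ((2 - 2 * p k) * s)
    with hKdef
  set K1 : ℝ → ℝ := fun s =>
      4 * π ^ 2 * ∑ k, (ω k) ^ 2 * (Real.exp ((2 - 2 * p k) * s) * (2 - 2 * p k)) with hK1def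
  set K2 : ℝ → ℝ := fun s =>
      4 * π ^ 2 * ∑ k, (ω k) ^ 2 * (Real.exp ((2 - 2 * p k) * s) * (2 - 2 * p k) * (2 - 2 * p k))
    with hK2def
  have hK : ∀ s, HasDerivAt K (K1 s) s := by
    intro s
    exact (HasDerivAt.fun_sum fun k _ =>
      (hasDerivAt_cexp (2 - 2 * p k) s).const_mul ((ω k) ^ 2)).const_mul (4 * π ^ 2)
  have hK1 : ∀ s, HasDerivAt K1 (K2 s) s := by
    intro s
    exact (HasDerivAt.fun_sum fun k _ =>
      (((hasDerivAt_cexp (2 - 2 * p k) s).mul_const (2 - 2 * p k)).const_mul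
        ((ω k) ^ 2))).const_mul (4 * π ^ 2)
  have hK2c : Continuous K2 := by
    apply continuous_const.mul
    exact continuous_finset_sum _ fun k _ => by fun_prop
  have hlow : ∀ s, (4 * π ^ 2 * (ω j) ^ 2) * Real.exp ((2 - 2 * p j) * s) ≤ K s := by
    intro s
    have h := Finset.single_le_sum
      (f := fun k => (ω k) ^ 2 * Real.exp ((2 - 2 * p k) * s))
      (fun i _ => by positivity) (mem_univ j)
    have h2 := mul_le_mul_of_nonneg_left h (show (0:ℝ) ≤ 4 * π ^ 2 by positivity)
    calc (4 * π ^ 2 * (ω j) ^ 2) * Real.exp ((2 - 2 * p j) * s)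
        = 4 * π ^ 2 * ((ω j) ^ 2 * Real.exp ((2 - 2 * p j) * s)) := by ring
      _ ≤ K s := h2
  have hA : 0 < 4 * π ^ 2 * (ω j) ^ 2 := by positivity
  have hε : 0 < 2 - 2 * p j := by linarith
  have hKpos : ∀ s, 0 < K s := fun s =>
    lt_of_lt_of_le (by positivity) (hlow s)
  have hK1b : ∀ s, |K1 s| ≤ 4 * K s := by
    intro s
    have h1 : ∀ k, (0:ℝ) ≤ (ω k) ^ 2 * (Real.exp ((2 - 2 * p k) * s) * (2 - 2 * p k)) := by
      intro k
      have := hc0 k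
      positivity
    have h2 : ∀ k, (ω k) ^ 2 * (Real.exp ((2 - 2 * p k) * s) * (2 - 2 * p k))
        ≤ 4 * ((ω k) ^ 2 * Real.exp ((2 - 2 * p k) * s)) := by
      intro k
      nlinarith [mul_nonneg (mul_nonneg (sq_nonneg (ω k))
        (Real.exp_pos ((2 - 2 * p k) * s)).le) (show (0:ℝ) ≤ 4 - (2 - 2 * p k) by linarith [hc4 k])]
    have hsumle : ∑ k, (ω k) ^ 2 * (Real.exp ((2 - 2 * p k) * s) * (2 - 2 * p k))
        ≤ 4 * ∑ k, (ω k) ^ 2 * Real.exp ((2 - 2 * p k) * s) := by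
      rw [Finset.mul_sum]
      exact Finset.sum_le_sum fun k _ => h2 k
    have hsumnn : (0:ℝ) ≤ ∑ k, (ω k) ^ 2 * (Real.exp ((2 - 2 * p k) * s) * (2 - 2 * p k)) :=
      Finset.sum_nonneg fun k _ => h1 k
    rw [hK1def]
    rw [abs_of_nonneg (by positivity)]
    have := mul_le_mul_of_nonneg_left hsumle (show (0:ℝ) ≤ 4 * π ^ 2 by positivity)
    calc 4 * π ^ 2 * ∑ k, (ω k) ^ 2 * (Real.exp ((2 - 2 * p k) * s) * (2 - 2 * p k))
        ≤ 4 * π ^ 2 * (4 * ∑ k, (ω k) ^ 2 * Real.exp ((2 - 2 * p k) * s)) := this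
      _ = 4 * K s := by rw [hKdef]; ring
  have hK2b : ∀ s, |K2 s| ≤ 16 * K s := by
    intro s
    have h2 : ∀ k, (ω k) ^ 2 * (Real.exp ((2 - 2 * p k) * s) * (2 - 2 * p k) * (2 - 2 * p k))
        ≤ 16 * ((ω k) ^ 2 * Real.exp ((2 - 2 * p k) * s)) := by
      intro k
      nlinarith [mul_nonneg (mul_nonneg (sq_nonneg (ω k))
        (Real.exp_pos ((2 - 2 * p k) * s)).le)
        (show (0:ℝ) ≤ 16 - (2 - 2 * p k) * (2 - 2 * p k) by nlinarith [hc0 k, hc4 k]),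
        hc0 k, hc4 k]
    have hsumle : ∑ k, (ω k) ^ 2 * (Real.exp ((2 - 2 * p k) * s) * (2 - 2 * p k) * (2 - 2 * p k))
        ≤ 16 * ∑ k, (ω k) ^ 2 * Real.exp ((2 - 2 * p k) * s) := by
      rw [Finset.mul_sum]
      exact Finset.sum_le_sum fun k _ => h2 k
    have hsumnn : (0:ℝ) ≤ ∑ k, (ω k) ^ 2 *
        (Real.exp ((2 - 2 * p k) * s) * (2 - 2 * p k) * (2 - 2 * p k)) :=
      Finset.sum_nonneg fun k _ => by
        have := hc0 k
        positivity
    rw [hK2def, abs_of_nonneg (by positivity)]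
    have := mul_le_mul_of_nonneg_left hsumle (show (0:ℝ) ≤ 4 * π ^ 2 by positivity)
    calc 4 * π ^ 2 * ∑ k, (ω k) ^ 2 *
          (Real.exp ((2 - 2 * p k) * s) * (2 - 2 * p k) * (2 - 2 * p k))
        ≤ 4 * π ^ 2 * (16 * ∑ k, (ω k) ^ 2 * Real.exp ((2 - 2 * p k) * s)) := this
      _ = 16 * K s := by rw [hKdef]; ring
  exact wkb_aux K K1 K2 a hK hK1 hK2c hKpos hK1b hK2b _ _ hA hε hlow
end

section
/- Let p = (p₁, p₂, p₃) ∈ ℝ³ satisfy p₁ + p₂ + p₃ = 1 and p₁² + p₂² + p₃² = 1, let ω = (ω₁, ω₂, ω₃) ∈ ℝ³ with ω ≠ 0, and let α : (0,∞) → ℂ be twice differentiable and satisfy the mode ODE α''(t) + α'(t)/t + 4π² (Σ_{j=1}^{3} ω_j² t^{-2p_j}) α(t) = 0 for all t > 0. Then there exist constants C ≥ 0 and T > 0 such that |α(t)| ≤ C · (Σ_{j=1}^{3} ω_j² t^{2−2p_j})^{-1/4} for all t ≥ T. -/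
open Real Finset

noncomputable section
namespace LTAB

variable (p ω : Fin 3 → ℝ)
def qq (t : ℝ) : ℝ := 4*π^2 * ∑ j, ω j^2 * t ^ (-(2*p j))
def qd (t : ℝ) : ℝ := 4*π^2 * ∑ j, ω j^2 * (-(2*p j) * t ^ (-(2*p j)-1))
def NN (t : ℝ) : ℝ := 4*π^2 * ∑ j, (2-2*p j) * (ω j^2 * t ^ (-(2*p j)))
def Nd (t : ℝ) : ℝ := 4*π^2 * ∑ j, (2-2*p j) * (ω j^2 * (-(2*p j) * t ^ (-(2*p j)-1)))
def rr (t : ℝ) : ℝ := Real.sqrt (qq p ω t)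
def cc (t : ℝ) : ℝ := NN p ω t / (4 * qq p ω t * rr p ω t)
def cd (t : ℝ) : ℝ :=
  (2 * Nd p ω t * qq p ω t - 3 * NN p ω t * qd p ω t) / (8 * (qq p ω t)^2 * rr p ω t)
def GG (z Z : ℝ → ℝ) (t : ℝ) : ℝ :=
  t * rr p ω t * z t^2 + t / rr p ω t * (Z t)^2 + 2 * cc p ω t * (z t * Z t)
variable {p ω}

lemma qq_pos (hω : ω ≠ 0) {t : ℝ} (ht : 0 < t) : 0 < qq p ω t := by
  obtain ⟨j, hj⟩ := Function.ne_iff.mp hω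
  have hj2 : 0 < ω j ^ 2 := by
    have := pow_pos (abs_pos.mpr hj) 2
    rwa [sq_abs] at this
  have hsum : 0 < ∑ j, ω j^2 * t ^ (-(2*p j)) := by
    apply Finset.sum_pos'
    · intro i _
      have : (0:ℝ) < t ^ (-(2*p i)) := Real.rpow_pos_of_pos ht _
      positivity
    · exact ⟨j, Finset.mem_univ j, mul_pos hj2 (Real.rpow_pos_of_pos ht _)⟩
  have hπ : 0 < π := Real.pi_pos
  have : (0:ℝ) < 4*π^2 := by positivity
  exact mul_pos this hsum

lemma rr_pos (hω : ω ≠ 0) {t : ℝ} (ht : 0 < t) : 0 < rr p ω t :=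
  Real.sqrt_pos.mpr (qq_pos hω ht)

lemma rr_sq (hω : ω ≠ 0) {t : ℝ} (ht : 0 < t) : rr p ω t ^ 2 = qq p ω t :=
  Real.sq_sqrt (qq_pos hω ht).le

lemma hasDerivAt_qq {t : ℝ} (ht : 0 < t) : HasDerivAt (qq p ω) (qd p ω t) t := by
  apply HasDerivAt.const_mul
  apply HasDerivAt.fun_sum
  intro j _
  exact (Real.hasDerivAt_rpow_const (Or.inl ht.ne')).const_mul (ω j^2)

lemma hasDerivAt_NN {t : ℝ} (ht : 0 < t) : HasDerivAt (NN p ω) (Nd p ω t) t := by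
  apply HasDerivAt.const_mul
  apply HasDerivAt.fun_sum
  intro j _
  exact ((Real.hasDerivAt_rpow_const (Or.inl ht.ne')).const_mul (ω j^2)).const_mul _

lemma hasDerivAt_rr (hω : ω ≠ 0) {t : ℝ} (ht : 0 < t) :
    HasDerivAt (rr p ω) (qd p ω t / (2 * rr p ω t)) t := by
  have h := (Real.hasDerivAt_sqrt (qq_pos hω ht).ne').comp t (hasDerivAt_qq (p := p) (ω := ω) ht)
  refine h.congr_deriv ?_
  rw [rr]
  ring

lemma NN_eq {t : ℝ} (ht : 0 < t) : NN p ω t = 2 * qq p ω t + t * qd p ω t := by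
  simp only [NN, qq, qd, Finset.mul_sum]
  rw [← Finset.sum_add_distrib]
  apply Finset.sum_congr rfl
  intro j _
  have : t ^ (-(2*p j)) = t ^ (-(2*p j)-1) * t := by
    rw [← Real.rpow_add_one ht.ne']
    ring_nf
  rw [this]
  ring

lemma hasDerivAt_cc (hω : ω ≠ 0) {t : ℝ} (ht : 0 < t) :
    HasDerivAt (cc p ω) (cd p ω t) t := by
  have hq := qq_pos (p := p) hω ht
  have hr := rr_pos (p := p) hω ht
  have hD : HasDerivAt (fun s => 4 * qq p ω s * rr p ω s)
      (4 * qd p ω t * rr p ω t + 4 * qq p ω t * (qd p ω t / (2 * rr p ω t))) t :=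
    (((hasDerivAt_qq (p := p) (ω := ω) ht).const_mul 4).mul (hasDerivAt_rr hω ht))
  have h := (hasDerivAt_NN (p := p) (ω := ω) ht).div hD (by positivity)
  refine h.congr_deriv ?_
  rw [cd, ← rr_sq hω ht]
  field_simp
  ring

lemma hasDerivAt_G (hω : ω ≠ 0) (z Z : ℝ → ℝ)
    (hz : ∀ t > (0:ℝ), HasDerivAt z (Z t) t)
    (hZ : ∀ t > (0:ℝ), HasDerivAt Z (-(Z t)/t - qq p ω t * z t) t)
    {t : ℝ} (ht : 0 < t) :
    HasDerivAt (GG p ω z Z)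
      ((cd p ω t - cc p ω t / t) * (2 * (z t * Z t))) t := by
  have hq := qq_pos (p := p) hω ht
  have hr := rr_pos (p := p) hω ht
  have hA := ((hasDerivAt_id t).mul (hasDerivAt_rr (p := p) hω ht)).mul ((hz t ht).pow 2)
  have hB := ((hasDerivAt_id t).div (hasDerivAt_rr (p := p) hω ht) hr.ne').mul ((hZ t ht).pow 2)
  have hC := ((hasDerivAt_cc (p := p) hω ht).const_mul 2).mul ((hz t ht).mul (hZ t ht))
  have h := (hA.add hB).add hC
  refine h.congr_deriv ?_
  norm_num
  rw [cd, cc, NN_eq ht, ← rr_sq hω ht]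
  field_simp
  ring

lemma sqrt_rpow_half {t E : ℝ} (ht : 0 < t) : Real.sqrt (t ^ E) = t ^ (E/2) := by
  rw [Real.sqrt_eq_rpow, ← Real.rpow_mul ht.le]
  ring_nf

lemma NN_nonneg (hp : ∀ j, p j ≤ 1) {t : ℝ} (ht : 0 < t) : 0 ≤ NN p ω t := by
  have hπ := Real.pi_pos
  apply mul_nonneg (by positivity)
  apply Finset.sum_nonneg
  intro j _
  have h1 : 0 ≤ 2 - 2*p j := by have := hp j; linarith
  have h2 : (0:ℝ) < t ^ (-(2*p j)) := Real.rpow_pos_of_pos ht _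
  positivity

lemma cc_nonneg (hp : ∀ j, p j ≤ 1) (hω : ω ≠ 0) {t : ℝ} (ht : 0 < t) : 0 ≤ cc p ω t := by
  have hq := qq_pos (p := p) hω ht
  have hr := rr_pos (p := p) hω ht
  exact div_nonneg (NN_nonneg hp ht) (by positivity)

set_option maxHeartbeats 1000000 in

set_option maxHeartbeats 1000000 in
lemma key_asymp (hp : ∀ j, p j ≤ 1) (hω : ω ≠ 0) :
    ∃ B ≥ (0:ℝ), ∃ δ > (0:ℝ), ∃ T ≥ (1:ℝ), ∀ t ≥ T,
      0 ≤ cc p ω t ∧ cc p ω t ≤ t/2 ∧ |cd p ω t| + cc p ω t / t ≤ (B/2) * t ^ (-δ) := by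
  have hπ := Real.pi_pos
  -- the support
  obtain ⟨j₀, hj₀⟩ := Function.ne_iff.mp hω
  have hj₀' : ω j₀ ≠ 0 := by simpa using hj₀
  have hSne : (Finset.univ.filter (fun j => ω j ≠ 0)).Nonempty :=
    ⟨j₀, by simp [hj₀']⟩
  obtain ⟨js, hjs, hjsmax⟩ := Finset.exists_max_image _ (fun j => -(2*p j)) hSne
  have hωjs : ω js ≠ 0 := (Finset.mem_filter.mp hjs).2
  set E := -(2*p js) with hE
  clear_value E
  set cq := 4*π^2 * ω js^2 with hcq
  have hcqpos : 0 < cq := by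
    have : 0 < ω js ^2 := by positivity
    positivity
  set Cq := 4*π^2 * ∑ j, ω j^2 with hCq
  set Cq1 := 4*π^2 * ∑ j, |2*p j| * ω j^2 with hCq1
  clear_value cq Cq Cq1
  have hCqpos : 0 < Cq := by
    rw [hCq]
    apply mul_pos (by positivity)
    apply Finset.sum_pos' (fun i _ => by positivity) ⟨js, Finset.mem_univ js, by positivity⟩
  have hCq1nn : 0 ≤ Cq1 := by
    rw [hCq1]
    apply mul_nonneg (by positivity)
    exact Finset.sum_nonneg fun i _ => by positivity
  -- lower and upper bounds on qq, |qd|, rr for t ≥ 1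
  have hql : ∀ t : ℝ, 1 ≤ t → cq * t ^ E ≤ qq p ω t := by
    intro t ht1
    rw [qq, hcq, hE, mul_assoc]
    apply mul_le_mul_of_nonneg_left _ (by positivity)
    have ht0 : (0:ℝ) < t := lt_of_lt_of_le one_pos ht1
    exact Finset.single_le_sum (f := fun j => ω j^2 * t ^ (-(2*p j)))
      (fun i _ => mul_nonneg (sq_nonneg _) (Real.rpow_pos_of_pos ht0 _).le) (Finset.mem_univ js)
  have hqu : ∀ t : ℝ, 1 ≤ t → qq p ω t ≤ Cq * t ^ E := by
    intro t ht1
    have ht0 : (0:ℝ) < t := lt_of_lt_of_le one_pos ht1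
    calc qq p ω t = 4*π^2 * ∑ j, ω j^2 * t ^ (-(2*p j)) := rfl
      _ ≤ 4*π^2 * ∑ j, ω j^2 * t ^ E := by
          apply mul_le_mul_of_nonneg_left _ (by positivity)
          apply Finset.sum_le_sum
          intro j _
          rcases eq_or_ne (ω j) 0 with h | h
          · simp [h]
          · apply mul_le_mul_of_nonneg_left _ (sq_nonneg _)
            exact Real.rpow_le_rpow_of_exponent_le ht1
              (hjsmax j (Finset.mem_filter.mpr ⟨Finset.mem_univ j, h⟩))
      _ = Cq * t ^ E := by rw [hCq]; simp only [mul_assoc, Finset.sum_mul]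
  have hq1 : ∀ t : ℝ, 1 ≤ t → |qd p ω t| ≤ Cq1 * t ^ (E-1) := by
    intro t ht1
    have ht0 : (0:ℝ) < t := lt_of_lt_of_le one_pos ht1
    calc |qd p ω t| = |4*π^2 * ∑ j, ω j^2 * (-(2*p j) * t ^ (-(2*p j)-1))| := rfl
      _ ≤ 4*π^2 * ∑ j, |ω j^2 * (-(2*p j) * t ^ (-(2*p j)-1))| := by
          rw [abs_mul, abs_of_nonneg (by positivity : (0:ℝ) ≤ 4*π^2)]
          exact mul_le_mul_of_nonneg_left (Finset.abs_sum_le_sum_abs _ _) (by positivity)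
      _ ≤ 4*π^2 * ∑ j, |2*p j| * ω j^2 * t ^ (E-1) := by
          apply mul_le_mul_of_nonneg_left _ (by positivity)
          apply Finset.sum_le_sum
          intro j _
          have hterm : |ω j^2 * (-(2*p j) * t ^ (-(2*p j)-1))| = |2*p j| * ω j^2 * t ^ (-(2*p j)-1) := by
            rw [abs_mul, abs_mul, abs_neg, abs_of_nonneg (sq_nonneg _),
              abs_of_nonneg (Real.rpow_pos_of_pos ht0 _).le]
            ring
          rw [hterm]
          rcases eq_or_ne (ω j) 0 with h | h
          · simp [h]
          · apply mul_le_mul_of_nonneg_left _ (by positivity)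
            apply Real.rpow_le_rpow_of_exponent_le ht1
            have := hjsmax j (Finset.mem_filter.mpr ⟨Finset.mem_univ j, h⟩)
            linarith
      _ = Cq1 * t ^ (E-1) := by rw [hCq1]; simp only [mul_assoc, Finset.sum_mul]
  have hrl : ∀ t : ℝ, 1 ≤ t → Real.sqrt cq * t ^ (E/2) ≤ rr p ω t := by
    intro t ht1
    have ht0 : (0:ℝ) < t := lt_of_lt_of_le one_pos ht1
    rw [rr, ← sqrt_rpow_half ht0, ← Real.sqrt_mul hcqpos.le]
    exact Real.sqrt_le_sqrt (hql t ht1)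
  have hru : ∀ t : ℝ, 1 ≤ t → rr p ω t ≤ Real.sqrt Cq * t ^ (E/2) := by
    intro t ht1
    have ht0 : (0:ℝ) < t := lt_of_lt_of_le one_pos ht1
    rw [rr, ← sqrt_rpow_half ht0, ← Real.sqrt_mul hCqpos.le]
    exact Real.sqrt_le_sqrt (hqu t ht1)
  -- case split on whether all relevant exponents are trivial
  by_cases hS0 : (Finset.univ.filter (fun j => ω j ≠ 0 ∧ p j ≠ 1)).Nonempty
  case neg =>
    -- NN and Nd vanish identically
    have hz : ∀ j : Fin 3, (2 - 2*p j) * ω j ^2 = 0 := by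
      intro j
      by_contra h
      apply hS0
      refine ⟨j, Finset.mem_filter.mpr ⟨Finset.mem_univ j, ?_, ?_⟩⟩
      · intro h0; apply h; rw [h0]; ring
      · intro h1; apply h; rw [h1]; ring
    have hNN0 : ∀ t : ℝ, NN p ω t = 0 := by
      intro t
      rw [NN, Finset.sum_eq_zero (fun j _ => by linear_combination (t ^ (-(2*p j))) * hz j), mul_zero]
    have hNd0 : ∀ t : ℝ, Nd p ω t = 0 := by
      intro t
      rw [Nd, Finset.sum_eq_zero (fun j _ => by linear_combination (-(2*p j) * t ^ (-(2*p j)-1)) * hz j), mul_zero]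
    refine ⟨0, le_refl _, 1, one_pos, 1, le_refl _, ?_⟩
    intro t ht1
    have ht0 : (0:ℝ) < t := lt_of_lt_of_le one_pos ht1
    have hc0 : cc p ω t = 0 := by rw [cc, hNN0, zero_div]
    have hd0 : cd p ω t = 0 := by rw [cd, hNN0, hNd0]; ring_nf
    refine ⟨by rw [hc0], by rw [hc0]; positivity, ?_⟩
    rw [hc0, hd0]
    simp
  case pos =>
    obtain ⟨jn, hjn, hjnmax⟩ := Finset.exists_max_image _ (fun j => -(2*p j)) hS0
    obtain ⟨hωjn, hpjn⟩ := (Finset.mem_filter.mp hjn).2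
    set E0 := -(2*p jn) with hE0
    have hE0E : E0 ≤ E := by
      rw [hE0]
      exact hjsmax jn (Finset.mem_filter.mpr ⟨Finset.mem_univ jn, hωjn⟩)
    clear_value E0
    have hE0gt : -2 < E0 := by
      have h1 := hp jn
      have : p jn < 1 := lt_of_le_of_ne h1 hpjn
      rw [hE0]; linarith
    set CN := 4*π^2 * ∑ j, (2-2*p j) * ω j^2 with hCN
    set CN1 := 4*π^2 * ∑ j, (2-2*p j) * ω j^2 * |2*p j| with hCN1
    clear_value CN CN1
    have hCNnn : 0 ≤ CN := by
      rw [hCN]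
      apply mul_nonneg (by positivity)
      apply Finset.sum_nonneg
      intro j _
      have := hp j
      nlinarith [sq_nonneg (ω j)]
    have hCN1nn : 0 ≤ CN1 := by
      rw [hCN1]
      apply mul_nonneg (by positivity)
      apply Finset.sum_nonneg
      intro j _
      have := hp j
      exact mul_nonneg (mul_nonneg (by linarith) (sq_nonneg _)) (abs_nonneg _)
    -- upper bounds for NN and Nd
    have hNu : ∀ t : ℝ, 1 ≤ t → NN p ω t ≤ CN * t ^ E0 := by
      intro t ht1
      have ht0 : (0:ℝ) < t := lt_of_lt_of_le one_pos ht1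
      calc NN p ω t = 4*π^2 * ∑ j, (2-2*p j) * (ω j^2 * t ^ (-(2*p j))) := rfl
        _ ≤ 4*π^2 * ∑ j, (2-2*p j) * ω j^2 * t ^ E0 := by
            apply mul_le_mul_of_nonneg_left _ (by positivity)
            apply Finset.sum_le_sum
            intro j _
            rcases eq_or_ne (ω j) 0 with h | h
            · simp [h]
            rcases eq_or_ne (p j) 1 with h1 | h1
            · simp [h1]
            have hmem := hjnmax j (Finset.mem_filter.mpr ⟨Finset.mem_univ j, h, h1⟩)
            have hco : (0:ℝ) ≤ 2 - 2*p j := by have := hp j; linarith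
            rw [mul_assoc]
            apply mul_le_mul_of_nonneg_left _ hco
            apply mul_le_mul_of_nonneg_left _ (sq_nonneg _)
            exact Real.rpow_le_rpow_of_exponent_le ht1 hmem
        _ = CN * t ^ E0 := by rw [hCN]; simp only [mul_assoc, Finset.sum_mul]
    have hN1 : ∀ t : ℝ, 1 ≤ t → |Nd p ω t| ≤ CN1 * t ^ (E0-1) := by
      intro t ht1
      have ht0 : (0:ℝ) < t := lt_of_lt_of_le one_pos ht1
      calc |Nd p ω t| = |4*π^2 * ∑ j, (2-2*p j) * (ω j^2 * (-(2*p j) * t ^ (-(2*p j)-1)))| := rfl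
        _ ≤ 4*π^2 * ∑ j, |(2-2*p j) * (ω j^2 * (-(2*p j) * t ^ (-(2*p j)-1)))| := by
            rw [abs_mul, abs_of_nonneg (by positivity : (0:ℝ) ≤ 4*π^2)]
            exact mul_le_mul_of_nonneg_left (Finset.abs_sum_le_sum_abs _ _) (by positivity)
        _ ≤ 4*π^2 * ∑ j, (2-2*p j) * ω j^2 * |2*p j| * t ^ (E0-1) := by
            apply mul_le_mul_of_nonneg_left _ (by positivity)
            apply Finset.sum_le_sum
            intro j _
            have hco : (0:ℝ) ≤ 2 - 2*p j := by have := hp j; linarith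
            have hterm : |(2-2*p j) * (ω j^2 * (-(2*p j) * t ^ (-(2*p j)-1)))|
                = (2-2*p j) * ω j^2 * |2*p j| * t ^ (-(2*p j)-1) := by
              rw [abs_mul, abs_mul, abs_mul, abs_neg, abs_of_nonneg hco,
                abs_of_nonneg (sq_nonneg _), abs_of_nonneg (Real.rpow_pos_of_pos ht0 _).le]
              ring
            rw [hterm]
            rcases eq_or_ne (ω j) 0 with h | h
            · simp [h]
            rcases eq_or_ne (p j) 1 with h1 | h1
            · simp [h1]
            have hmem := hjnmax j (Finset.mem_filter.mpr ⟨Finset.mem_univ j, h, h1⟩)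
            apply mul_le_mul_of_nonneg_left _ (by positivity)
            apply Real.rpow_le_rpow_of_exponent_le ht1
            linarith
        _ = CN1 * t ^ (E0-1) := by rw [hCN1]; simp only [mul_assoc, Finset.sum_mul]
    -- constants
    set Kc := CN / (4*cq*Real.sqrt cq) with hKc
    set Kd := (2*CN1*Cq + 3*CN*Cq1) / (8*cq^2*Real.sqrt cq) with hKd
    clear_value Kc Kd
    have hscq : (0:ℝ) < Real.sqrt cq := Real.sqrt_pos.mpr hcqpos
    have hKcnn : 0 ≤ Kc := by
      rw [hKc]; exact div_nonneg hCNnn (by positivity)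
    have hKdnn : 0 ≤ Kd := by
      rw [hKd]
      apply div_nonneg _ (by positivity)
      have := mul_nonneg (mul_nonneg hCN1nn hCqpos.le) (by norm_num : (0:ℝ) ≤ 2)
      nlinarith [mul_nonneg hCNnn hCq1nn, mul_nonneg hCN1nn hCqpos.le]
    set δ := 3*E/2 + 1 - E0 with hδdef
    clear_value δ
    have hδpos : 0 < δ := by rw [hδdef]; nlinarith
    -- pointwise bounds
    have hccu : ∀ t : ℝ, 1 ≤ t → cc p ω t ≤ Kc * t ^ (-δ+1) := by
      intro t ht1
      have ht0 : (0:ℝ) < t := lt_of_lt_of_le one_pos ht1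
      have hq := qq_pos (p := p) hω ht0
      have hr := rr_pos (p := p) hω ht0
      have hDl : 4*(cq*t^E)*(Real.sqrt cq * t^(E/2)) ≤ 4*qq p ω t*rr p ω t := by
        have h1 := hql t ht1
        have h2 := hrl t ht1
        have hcb : (0:ℝ) ≤ 4*(cq*t^E) := by positivity
        calc 4*(cq*t^E)*(Real.sqrt cq * t^(E/2)) ≤ 4*(cq*t^E)*rr p ω t :=
              mul_le_mul_of_nonneg_left h2 hcb
          _ ≤ 4*qq p ω t*rr p ω t := by
              apply mul_le_mul_of_nonneg_right _ hr.le
              linarith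
      have hDpos : (0:ℝ) < 4*(cq*t^E)*(Real.sqrt cq * t^(E/2)) := by positivity
      have step : cc p ω t ≤ (CN * t^E0) / (4*(cq*t^E)*(Real.sqrt cq * t^(E/2))) := by
        rw [cc]
        exact div_le_div₀ (by positivity) (hNu t ht1) hDpos hDl
      refine step.trans (le_of_eq ?_)
      rw [hKc]
      have hcomb : t^(-δ+1) * (t^E * t^(E/2)) = t^E0 := by
        rw [← Real.rpow_add ht0, ← Real.rpow_add ht0]
        congr 1
        rw [hδdef]; ring
      field_simp
      rw [← hcomb]
      ring
    have hcdu : ∀ t : ℝ, 1 ≤ t → |cd p ω t| ≤ Kd * t ^ (-δ) := by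
      intro t ht1
      have ht0 : (0:ℝ) < t := lt_of_lt_of_le one_pos ht1
      have hq := qq_pos (p := p) hω ht0
      have hr := rr_pos (p := p) hω ht0
      have hNn := NN_nonneg (p := p) (ω := ω) hp ht0
      have habs : |cd p ω t| ≤ (2 * |Nd p ω t| * qq p ω t + 3 * NN p ω t * |qd p ω t|)
          / (8*(qq p ω t)^2*rr p ω t) := by
        rw [cd, abs_div, abs_of_nonneg (by positivity : (0:ℝ) ≤ 8*(qq p ω t)^2*rr p ω t)]
        apply div_le_div_of_nonneg_right ?_ (by positivity)
        calc |2 * Nd p ω t * qq p ω t - 3 * NN p ω t * qd p ω t|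
            ≤ |2 * Nd p ω t * qq p ω t| + |3 * NN p ω t * qd p ω t| := abs_sub _ _
          _ = 2 * |Nd p ω t| * qq p ω t + 3 * NN p ω t * |qd p ω t| := by
              rw [abs_mul, abs_mul, abs_mul, abs_mul]
              rw [abs_of_nonneg hq.le, abs_of_nonneg hNn]
              norm_num
      have hnum : 2 * |Nd p ω t| * qq p ω t + 3 * NN p ω t * |qd p ω t|
          ≤ (2*CN1*Cq + 3*CN*Cq1) * (t^(E0-1) * t^E) := by
        have h1 := hN1 t ht1
        have h2 := hqu t ht1
        have h3 := hNu t ht1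
        have h4 := hq1 t ht1
        have e1 : t^(E0-1)*t^E = t^E0 * t^(E-1) := by
          rw [← Real.rpow_add ht0, ← Real.rpow_add ht0]; ring_nf
        have b1 : 2 * |Nd p ω t| * qq p ω t ≤ 2*(CN1*t^(E0-1))*(Cq*t^E) := by
          apply mul_le_mul (by linarith [mul_le_mul_of_nonneg_left h1 (by norm_num : (0:ℝ) ≤ 2)]) h2 hq.le
          positivity
        have b2 : 3 * NN p ω t * |qd p ω t| ≤ 3*(CN*t^E0)*(Cq1*t^(E-1)) := by
          apply mul_le_mul (by linarith [mul_le_mul_of_nonneg_left h3 (by norm_num : (0:ℝ) ≤ 3)]) h4 (abs_nonneg _)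
          positivity
        calc 2 * |Nd p ω t| * qq p ω t + 3 * NN p ω t * |qd p ω t|
            ≤ 2*(CN1*t^(E0-1))*(Cq*t^E) + 3*(CN*t^E0)*(Cq1*t^(E-1)) := by linarith
          _ = (2*CN1*Cq + 3*CN*Cq1) * (t^(E0-1) * t^E) := by
              linear_combination (-(3*CN*Cq1)) * e1
      have hden : 8*(cq*t^E)^2*(Real.sqrt cq * t^(E/2)) ≤ 8*(qq p ω t)^2*rr p ω t := by
        have h1 := hql t ht1
        have h2 := hrl t ht1
        have hsq : (cq*t^E)^2 ≤ (qq p ω t)^2 := by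
          apply sq_le_sq'
          · nlinarith [Real.rpow_pos_of_pos ht0 E, hcqpos]
          · exact h1
        calc 8*(cq*t^E)^2*(Real.sqrt cq * t^(E/2)) ≤ 8*(qq p ω t)^2*(Real.sqrt cq * t^(E/2)) := by
              apply mul_le_mul_of_nonneg_right _ (by positivity)
              nlinarith
          _ ≤ 8*(qq p ω t)^2*rr p ω t := by
              apply mul_le_mul_of_nonneg_left h2 (by positivity)
      have hDpos : (0:ℝ) < 8*(cq*t^E)^2*(Real.sqrt cq * t^(E/2)) := by positivity
      have step : |cd p ω t| ≤ ((2*CN1*Cq + 3*CN*Cq1) * (t^(E0-1) * t^E))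
          / (8*(cq*t^E)^2*(Real.sqrt cq * t^(E/2))) := by
        refine habs.trans ?_
        apply div_le_div₀ _ hnum hDpos hden
        positivity
      refine step.trans (le_of_eq ?_)
      rw [hKd]
      have hcomb : t^(-δ) * ((t^E)^2 * t^(E/2)) = t^(E0-1) * t^E := by
        rw [← Real.rpow_natCast (t^E) 2, ← Real.rpow_mul ht0.le,
          ← Real.rpow_add ht0, ← Real.rpow_add ht0, ← Real.rpow_add ht0]
        congr 1
        rw [hδdef]; push_cast; ring
      field_simp
      have hcomb' : t^(E0-1) = t^E * t^(E/2) * t^(-δ) := by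
        rw [← Real.rpow_add ht0, ← Real.rpow_add ht0]
        congr 1
        rw [hδdef]; ring
      rw [hcomb']
      ring
    -- choose T
    have htend : Filter.Tendsto (fun t:ℝ => Kc * t^(-δ)) Filter.atTop (nhds 0) := by
      have := tendsto_rpow_neg_atTop hδpos
      simpa using this.const_mul Kc
    have hev : ∀ᶠ t in Filter.atTop, Kc * t^(-δ) < 1/2 := by
      apply htend.eventually_lt_const
      norm_num
    obtain ⟨T1, hT1⟩ := Filter.eventually_atTop.mp hev
    refine ⟨2*(Kd + Kc), by positivity, δ, hδpos, max 1 T1, le_max_left _ _, ?_⟩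
    intro t hts
    have ht1 : (1:ℝ) ≤ t := le_trans (le_max_left _ _) hts
    have ht0 : (0:ℝ) < t := lt_of_lt_of_le one_pos ht1
    have hsmall : Kc * t^(-δ) < 1/2 := hT1 t (le_trans (le_max_right _ _) hts)
    have hrpow1 : t^(-δ+1) = t^(-δ) * t := by
      rw [Real.rpow_add ht0, Real.rpow_one]
    refine ⟨cc_nonneg hp hω ht0, ?_, ?_⟩
    · calc cc p ω t ≤ Kc * t^(-δ+1) := hccu t ht1
        _ = (Kc * t^(-δ)) * t := by rw [hrpow1]; ring
        _ ≤ (1/2) * t := mul_le_mul_of_nonneg_right hsmall.le ht0.le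
        _ = t/2 := by ring
    · have h1 := hcdu t ht1
      have h2 : cc p ω t / t ≤ Kc * t^(-δ) := by
        rw [div_le_iff₀ ht0]
        calc cc p ω t ≤ Kc * t^(-δ+1) := hccu t ht1
          _ = Kc * t^(-δ) * t := by rw [hrpow1]; ring
      calc |cd p ω t| + cc p ω t / t ≤ Kd * t^(-δ) + Kc * t^(-δ) := by linarith
        _ = (2*(Kd+Kc))/2 * t^(-δ) := by ring

lemma component_bound (hp : ∀ j, p j ≤ 1) (hω : ω ≠ 0) (z Z : ℝ → ℝ)
    (hz : ∀ t > (0:ℝ), HasDerivAt z (Z t) t)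
    (hZ : ∀ t > (0:ℝ), HasDerivAt Z (-(Z t)/t - qq p ω t * z t) t) :
    ∃ M ≥ (0:ℝ), ∃ T ≥ (1:ℝ), ∀ t ≥ T, t * rr p ω t * (z t)^2 ≤ M := by
  obtain ⟨B, hB, δ, hδ, T, hT1, hbnd⟩ := key_asymp (p := p) (ω := ω) hp hω
  set G := GG p ω z Z with hG
  clear_value G
  set φ := fun t : ℝ => G t * Real.exp ((B/δ) * t ^ (-δ)) with hφ
  clear_value φ
  have hφt : ∀ t : ℝ, φ t = G t * Real.exp ((B/δ) * t ^ (-δ)) := fun t => by rw [hφ]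
  have hfacts : ∀ t ≥ T, 0 ≤ G t ∧ t * rr p ω t * z t^2 ≤ 2 * G t ∧
      (cd p ω t - cc p ω t / t) * (2 * (z t * Z t)) ≤ B * t ^ (-δ-1) * G t := by
    intro t ht
    have ht1 : (1:ℝ) ≤ t := le_trans hT1 ht
    have ht0 : (0:ℝ) < t := lt_of_lt_of_le one_pos ht1
    obtain ⟨hc0, hc2, hcd⟩ := hbnd t ht
    have hr := rr_pos (p := p) hω ht0
    set P := rr p ω t * z t^2 + (Z t)^2 / rr p ω t with hP
    have hPnn : 0 ≤ P := by positivity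
    clear_value P
    have hcross : |2 * (z t * Z t)| ≤ P := by
      have h1 : |2 * (z t * Z t) * rr p ω t| ≤ rr p ω t ^2 * z t^2 + Z t^2 := by
        rw [abs_le]
        constructor <;>
          nlinarith [sq_nonneg (rr p ω t * z t + Z t), sq_nonneg (rr p ω t * z t - Z t)]
      have h1' : |2 * (z t * Z t)| * rr p ω t ≤ rr p ω t ^2 * z t^2 + Z t^2 := by
        rwa [abs_mul, abs_of_pos hr] at h1
      calc |2 * (z t * Z t)| = |2 * (z t * Z t)| * rr p ω t / rr p ω t := by field_simp
        _ ≤ (rr p ω t^2 * z t^2 + Z t^2) / rr p ω t := (div_le_div_iff_of_pos_right hr).mpr h1'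
        _ = P := by rw [hP]; field_simp
    have e0 : t * rr p ω t * z t^2 + t / rr p ω t * (Z t)^2 = t * P := by
      rw [hP]; field_simp
    have habs2 : |2 * cc p ω t * (z t * Z t)| ≤ t/2 * P := by
      have : |2 * cc p ω t * (z t * Z t)| = cc p ω t * |2 * (z t * Z t)| := by
        rw [show 2 * cc p ω t * (z t * Z t) = cc p ω t * (2 * (z t * Z t)) by ring,
          abs_mul, abs_of_nonneg hc0]
      rw [this]
      exact mul_le_mul hc2 hcross (abs_nonneg _) (by linarith)
    have hGP : t/2 * P ≤ G t := by
      have h2 := neg_abs_le (2 * cc p ω t * (z t * Z t))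
      have : G t = t * P + 2 * cc p ω t * (z t * Z t) := by
        rw [hG, GG, ← e0]
      rw [this]
      have e2 : t * P = 2 * (t/2 * P) := by ring
      linarith
    have hGnn : 0 ≤ G t := le_trans (by positivity) hGP
    refine ⟨hGnn, ?_, ?_⟩
    · have h3 : t * rr p ω t * z t^2 ≤ t * P := by
        rw [hP]
        have : (0:ℝ) ≤ (Z t)^2 / rr p ω t := by positivity
        nlinarith
      have e2 : t * P = 2 * (t/2 * P) := by ring
      linarith
    · have hstep : (cd p ω t - cc p ω t / t) * (2 * (z t * Z t))
          ≤ (B/2) * t ^ (-δ) * P := by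
        calc (cd p ω t - cc p ω t / t) * (2 * (z t * Z t))
            ≤ |cd p ω t - cc p ω t / t| * |2 * (z t * Z t)| := by
              rw [← abs_mul]; exact le_abs_self _
          _ ≤ (|cd p ω t| + cc p ω t / t) * P := by
              apply mul_le_mul _ hcross (abs_nonneg _)
              · have := abs_nonneg (cd p ω t)
                have : (0:ℝ) ≤ cc p ω t / t := by positivity
                linarith [abs_nonneg (cd p ω t)]
              · calc |cd p ω t - cc p ω t / t| ≤ |cd p ω t| + |cc p ω t / t| := abs_sub _ _
                  _ = |cd p ω t| + cc p ω t / t := by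
                      rw [abs_of_nonneg (by positivity : (0:ℝ) ≤ cc p ω t / t)]
          _ ≤ (B/2) * t ^ (-δ) * P := by
              apply mul_le_mul_of_nonneg_right hcd hPnn
      have hPG : P ≤ 2 * G t / t := by
        rw [le_div_iff₀ ht0]
        have e2 : P * t = 2 * (t/2 * P) := by ring
        linarith
      have hBt : (0:ℝ) ≤ (B/2) * t ^ (-δ) := by positivity
      calc (cd p ω t - cc p ω t / t) * (2 * (z t * Z t))
          ≤ (B/2) * t ^ (-δ) * (2 * G t / t) := by
            refine hstep.trans (mul_le_mul_of_nonneg_left hPG hBt)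
        _ = B * t ^ (-δ-1) * G t := by
            rw [show (-δ-1 : ℝ) = -δ - 1 from rfl, Real.rpow_sub ht0, Real.rpow_one]
            field_simp
  -- φ has nonpositive derivative on [T, ∞)
  have hTpos : (0:ℝ) < T := lt_of_lt_of_le one_pos hT1
  have hφd : ∀ t ≥ T, HasDerivAt φ
      (((cd p ω t - cc p ω t / t) * (2 * (z t * Z t))) * Real.exp ((B/δ) * t ^ (-δ))
        + G t * (Real.exp ((B/δ) * t ^ (-δ)) * ((B/δ) * (-δ * t ^ (-δ-1))))) t := by
    intro t ht
    have ht0 : (0:ℝ) < t := lt_of_lt_of_le hTpos ht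
    have h1 : HasDerivAt (fun s : ℝ => (B/δ) * s ^ (-δ)) ((B/δ) * (-δ * t ^ (-δ-1))) t :=
      (Real.hasDerivAt_rpow_const (Or.inl ht0.ne')).const_mul (B/δ)
    rw [hφ, hG]
    exact (hasDerivAt_G hω z Z hz hZ ht0).mul h1.exp
  have hφd0 : ∀ t ≥ T,
      ((cd p ω t - cc p ω t / t) * (2 * (z t * Z t))) * Real.exp ((B/δ) * t ^ (-δ))
        + G t * (Real.exp ((B/δ) * t ^ (-δ)) * ((B/δ) * (-δ * t ^ (-δ-1)))) ≤ 0 := by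
    intro t ht
    obtain ⟨hGnn, _, hGd⟩ := hfacts t ht
    have hδne : δ ≠ 0 := ne_of_gt hδ
    have hsimp : (B/δ) * (-δ * t ^ (-δ-1)) = -(B * t ^ (-δ-1)) := by
      field_simp
    rw [hsimp]
    have hexp := Real.exp_pos ((B/δ) * t ^ (-δ))
    nlinarith [mul_le_mul_of_nonneg_right hGd hexp.le]
  have hanti : AntitoneOn φ (Set.Ici T) := by
    apply antitoneOn_of_deriv_nonpos (convex_Ici T)
    · intro t ht
      exact (hφd t ht).continuousAt.continuousWithinAt
    · intro t ht
      rw [interior_Ici] at ht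
      exact ((hφd t (le_of_lt ht)).differentiableAt).differentiableWithinAt
    · intro t ht
      rw [interior_Ici] at ht
      rw [(hφd t (le_of_lt ht)).deriv]
      exact hφd0 t (le_of_lt ht)
  refine ⟨2 * φ T, ?_, T, hT1, ?_⟩
  · obtain ⟨hGnn, _, _⟩ := hfacts T le_rfl
    have hexp := Real.exp_pos ((B/δ) * T ^ (-δ))
    rw [hφt T]
    positivity
  · intro t ht
    obtain ⟨hGnn, hG2, _⟩ := hfacts t ht
    have ht0 : (0:ℝ) < t := lt_of_lt_of_le hTpos ht
    have hexp1 : (1:ℝ) ≤ Real.exp ((B/δ) * t ^ (-δ)) := by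
      rw [Real.one_le_exp_iff]
      positivity
    have hGφ : G t ≤ φ t := by
      rw [hφt t]
      calc G t = G t * 1 := by ring
        _ ≤ G t * Real.exp ((B/δ) * t ^ (-δ)) := by
            exact mul_le_mul_of_nonneg_left hexp1 hGnn
    have := hanti (Set.mem_Ici.mpr (le_refl T)) (Set.mem_Ici.mpr ht) ht
    calc t * rr p ω t * z t^2 ≤ 2 * G t := hG2
      _ ≤ 2 * φ t := by linarith
      _ ≤ 2 * φ T := by linarith

end LTAB
end

open LTAB

theorem large_time_amplitude_bound (p ω : Fin 3 → ℝ)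
    (hsum : ∑ j, p j = 1) (hsq : ∑ j, (p j) ^ 2 = 1)
    (hω : ω ≠ 0)
    (α : ℝ → ℂ)
    (hα : ∀ t > (0:ℝ), DifferentiableAt ℝ α t)
    (hα' : ∀ t > (0:ℝ), DifferentiableAt ℝ (deriv α) t)
    (hode : ∀ t > (0:ℝ), deriv (deriv α) t + deriv α t / (t : ℂ)
        + ((4 * π ^ 2 * ∑ j, (ω j) ^ 2 * t ^ (-(2 * p j)) : ℝ) : ℂ) * α t = 0) :
    ∃ C : ℝ, 0 ≤ C ∧ ∃ T : ℝ, 0 < T ∧ ∀ t ≥ T,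
      ‖α t‖ ≤ C * (∑ j, (ω j) ^ 2 * t ^ (2 - 2 * p j)) ^ (-(1:ℝ)/4) := by
  have hp1 : ∀ j, p j ≤ 1 := by
    intro j
    have h1 : p j^2 ≤ 1 := by
      rw [← hsq]
      exact Finset.single_le_sum (fun i _ => sq_nonneg (p i)) (Finset.mem_univ j)
    nlinarith
  -- rewrite ODE
  have hqc : ∀ t > (0:ℝ), deriv (deriv α) t
      = -(deriv α t / (t:ℂ)) - ((qq p ω t : ℝ) : ℂ) * α t := by
    intro t ht
    have h := hode t ht
    rw [qq]
    push_cast at h ⊢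
    linear_combination h
  -- real and imaginary parts
  have hre : ∀ t > (0:ℝ), HasDerivAt (fun s => (α s).re) ((deriv α t).re) t := by
    intro t ht
    exact (Complex.reCLM.hasFDerivAt.comp_hasDerivAt t (hα t ht).hasDerivAt)
  have him : ∀ t > (0:ℝ), HasDerivAt (fun s => (α s).im) ((deriv α t).im) t := by
    intro t ht
    exact (Complex.imCLM.hasFDerivAt.comp_hasDerivAt t (hα t ht).hasDerivAt)
  have hre' : ∀ t > (0:ℝ), HasDerivAt (fun s => (deriv α s).re)
      (-((deriv α t).re)/t - qq p ω t * (α t).re) t := by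
    intro t ht
    have h2 := Complex.reCLM.hasFDerivAt.comp_hasDerivAt t (hα' t ht).hasDerivAt
    have h3 : (deriv (deriv α) t).re = -((deriv α t).re)/t - qq p ω t * (α t).re := by
      rw [hqc t ht]
      simp [Complex.div_ofReal_re]
      ring
    rw [← h3]
    exact h2
  have him' : ∀ t > (0:ℝ), HasDerivAt (fun s => (deriv α s).im)
      (-((deriv α t).im)/t - qq p ω t * (α t).im) t := by
    intro t ht
    have h2 := Complex.imCLM.hasFDerivAt.comp_hasDerivAt t (hα' t ht).hasDerivAt
    have h3 : (deriv (deriv α) t).im = -((deriv α t).im)/t - qq p ω t * (α t).im := by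
      rw [hqc t ht]
      simp [Complex.div_ofReal_im]
      ring
    rw [← h3]
    exact h2
  obtain ⟨Mx, hMx, Tx, hTx, hbx⟩ := component_bound hp1 hω _ _ hre hre'
  obtain ⟨My, hMy, Ty, hTy, hby⟩ := component_bound hp1 hω _ _ him him'
  refine ⟨Real.sqrt ((Mx + My) / (2*π)), Real.sqrt_nonneg _, max Tx Ty,
    lt_of_lt_of_le one_pos (le_trans hTx (le_max_left _ _)), ?_⟩
  intro t ht
  have ht1 : (1:ℝ) ≤ t := le_trans hTx (le_trans (le_max_left _ _) ht)
  have ht0 : (0:ℝ) < t := lt_of_lt_of_le one_pos ht1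
  have hbx' := hbx t (le_trans (le_max_left _ _) ht)
  have hby' := hby t (le_trans (le_max_right _ _) ht)
  set S := ∑ j, (ω j) ^ 2 * t ^ (2 - 2 * p j) with hS
  have hqS : t^(2:ℕ) * qq p ω t = 4*π^2 * S := by
    rw [qq, hS, Finset.mul_sum, Finset.mul_sum, Finset.mul_sum]
    apply Finset.sum_congr rfl
    intro j _
    have h2 : t^(2:ℕ) = t ^ ((2:ℕ):ℝ) := (Real.rpow_natCast t 2).symm
    rw [h2]
    push_cast
    rw [show t ^ (2:ℝ) * (4*π^2 * (ω j^2 * t ^ (-(2*p j))))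
        = 4*π^2 * (ω j^2 * (t ^ (2:ℝ) * t ^ (-(2*p j)))) from by ring,
      ← Real.rpow_add ht0]
    ring_nf
  have hq := qq_pos (p := p) hω ht0
  have hSpos : 0 < S := by
    have h4 : (0:ℝ) < t^(2:ℕ) * qq p ω t := by positivity
    rw [hqS] at h4
    have hπ := Real.pi_pos
    nlinarith
  have htr : t * rr p ω t = 2*π*Real.sqrt S := by
    have hπ := Real.pi_pos
    have hr := rr_pos (p := p) hω ht0
    have h1 : (t * rr p ω t)^2 = (2*π*Real.sqrt S)^2 := by
      rw [mul_pow, rr_sq hω ht0, hqS, mul_pow, mul_pow, Real.sq_sqrt hSpos.le]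
      ring
    have h2 : (0:ℝ) ≤ t * rr p ω t := by positivity
    have h3 : (0:ℝ) ≤ 2*π*Real.sqrt S := by positivity
    nlinarith
  -- combine
  have hπ := Real.pi_pos
  have hr := rr_pos (p := p) hω ht0
  have habs : (‖α t‖)^2 = (α t).re^2 + (α t).im^2 := by
    rw [Complex.sq_norm, Complex.normSq_apply]
    ring
  have hsum2 : t * rr p ω t * (‖α t‖)^2 ≤ Mx + My := by
    rw [habs]
    have := hbx'
    have := hby'
    nlinarith [hbx', hby']
  have hA2 : (‖α t‖)^2 ≤ (Mx + My) / (2*π*Real.sqrt S) := by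
    rw [le_div_iff₀ (by positivity)]
    calc ‖α t‖^2 * (2*π*Real.sqrt S)
        = t * rr p ω t * (‖α t‖)^2 := by rw [htr]; ring
      _ ≤ Mx + My := hsum2
  have hRHS : (Real.sqrt ((Mx + My) / (2*π)) * S ^ (-(1:ℝ)/4))^2
      = (Mx + My) / (2*π*Real.sqrt S) := by
    rw [mul_pow, Real.sq_sqrt (by positivity)]
    have h5 : (S ^ (-(1:ℝ)/4))^2 = S ^ (-(1:ℝ)/2) := by
      rw [← Real.rpow_natCast (S ^ (-(1:ℝ)/4)) 2, ← Real.rpow_mul hSpos.le]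
      norm_num
    have h6 : S ^ (-(1:ℝ)/2) = (Real.sqrt S)⁻¹ := by
      rw [show (-(1:ℝ)/2) = -(1/2:ℝ) by norm_num, Real.rpow_neg hSpos.le, Real.sqrt_eq_rpow]
    rw [h5, h6]
    have hs : Real.sqrt S ≠ 0 := by positivity
    field_simp
  have hAnn : (0:ℝ) ≤ ‖α t‖ := norm_nonneg _
  have hRnn : (0:ℝ) ≤ Real.sqrt ((Mx + My) / (2*π)) * S ^ (-(1:ℝ)/4) := by positivity
  have : (‖α t‖)^2 ≤ (Real.sqrt ((Mx + My) / (2*π)) * S ^ (-(1:ℝ)/4))^2 := by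
    rw [hRHS]; exact hA2
  calc ‖α t‖ = Real.sqrt ((‖α t‖)^2) := (Real.sqrt_sq hAnn).symm
    _ ≤ Real.sqrt ((Real.sqrt ((Mx + My) / (2*π)) * S ^ (-(1:ℝ)/4))^2) :=
        Real.sqrt_le_sqrt this
    _ = Real.sqrt ((Mx + My) / (2*π)) * S ^ (-(1:ℝ)/4) := Real.sqrt_sq hRnn
end
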